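/- arXiv:1007.2598 — 9 statements merged into one kernel-verified Lean document; each statement's English description precedes it below -/
import Mathlib

section
/- If F is a finitely generated free group and N < F is a characteristic subgroup of finite index, then the restriction map Aut(F) → Aut(N) is injective. -/
/-- In a free group, powers of a single generator are injective in the exponent. -/
lemma FreeGroup.of_zpow_injective {ι : Type} (i : ι) {k l : ℤ}
    (h : (FreeGroup.of i : FreeGroup ι) ^ k = FreeGroup.of i ^ l) : k = l := by
  have := congrArg (FreeGroup.lift (fun _ : ι => Multiplicative.ofAdd (1 : ℤ))) h
  simp only [map_zpow, FreeGroup.lift_apply_of] at this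
  have h2 := congrArg Multiplicative.toAdd this
  simpa using h2

/-- Every element of a free group over a subsingleton type is a power of the generator. -/
lemma FreeGroup.exists_zpow_of_subsingleton {ι : Type} [Subsingleton ι] (i : ι)
    (u : FreeGroup ι) : ∃ k : ℤ, u = FreeGroup.of i ^ k := by
  haveI : Unique ι := uniqueOfSubsingleton i
  let e : FreeGroup ι ≃* FreeGroup Unit := FreeGroup.freeGroupCongr (Equiv.ofUnique ι Unit)
  refine ⟨FreeGroup.freeGroupUnitEquivInt (e u), ?_⟩
  apply e.injective
  rw [map_zpow]
  have hof : e (FreeGroup.of i) = FreeGroup.of () := by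
    simp [e, FreeGroup.freeGroupCongr_apply, FreeGroup.map.of]
  rw [hof]
  exact (FreeGroup.freeGroupUnitEquivInt.left_inv (e u)).symm

/-- A free group over an empty type is a subsingleton. -/
lemma FreeGroup.subsingleton_of_isEmpty {ι : Type} [IsEmpty ι] :
    Subsingleton (FreeGroup ι) := by
  constructor
  intro u v
  have hu : u.toWord = [] := by
    cases h : u.toWord with
    | nil => rfl
    | cons a _ => exact (IsEmpty.false a.1).elim
  have hv : v.toWord = [] := by
    cases h : v.toWord with
    | nil => rfl
    | cons a _ => exact (IsEmpty.false a.1).elim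
  rw [FreeGroup.toWord_eq_nil_iff] at hu hv
  rw [hu, hv]

/-- Unique roots in free groups. -/
theorem FreeGroup.pow_left_injective {α : Type} {n : ℕ} (hn : n ≠ 0)
    {x y : FreeGroup α} (h : x ^ n = y ^ n) : x = y := by
  set H := Subgroup.closure ({x, y} : Set (FreeGroup α)) with hH
  have hx : x ∈ H := Subgroup.subset_closure (by simp)
  have hy : y ∈ H := Subgroup.subset_closure (by simp)
  set ι := IsFreeGroup.Generators H with hι
  let e : H ≃* FreeGroup ι := IsFreeGroup.toFreeGroup H
  set x' : H := ⟨x, hx⟩ with hx'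
  set y' : H := ⟨y, hy⟩ with hy'
  have hxy' : x' ^ n = y' ^ n := by
    apply Subtype.ext
    push_cast
    exact h
  -- abelianization map
  let ab : FreeGroup ι →* Multiplicative (ι →₀ ℤ) :=
    FreeGroup.lift (fun i => Multiplicative.ofAdd (Finsupp.single i 1))
  -- images of x and y agree in the abelianization
  have hab : ab (e x') = ab (e y') := by
    have h1 : (ab (e x')) ^ n = (ab (e y')) ^ n := by
      rw [← map_pow, ← map_pow, ← map_pow, ← map_pow, hxy']
    have h2 : (n : ℤ) • (ab (e x')).toAdd = (n : ℤ) • (ab (e y')).toAdd := by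
      have := congrArg Multiplicative.toAdd h1
      simpa [toAdd_pow, natCast_zsmul] using this
    have h3 : (ab (e x')).toAdd = (ab (e y')).toAdd := by
      ext j
      have := congrArg (fun f => f j) h2
      simp only [Finsupp.smul_apply, smul_eq_mul] at this
      exact mul_left_cancel₀ (by exact_mod_cast hn) this
    exact Multiplicative.toAdd.injective h3
  -- all of FreeGroup ι maps into the cyclic subgroup generated by ab (e x')
  have htop : Subgroup.closure (H.subtype ⁻¹' {x, y}) = ⊤ :=
    Subgroup.closure_preimage_eq_top ({x, y} : Set (FreeGroup α))
  have h2 : Subgroup.closure ((e : H →* FreeGroup ι) '' (H.subtype ⁻¹' {x, y})) = ⊤ := by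
    rw [← MonoidHom.map_closure, htop, Subgroup.map_top_of_surjective _ e.surjective]
  have hall : ∀ u : FreeGroup ι, ab u ∈ Subgroup.zpowers (ab (e x')) := by
    intro u
    have hu : u ∈ Subgroup.closure ((e : H →* FreeGroup ι) '' (H.subtype ⁻¹' {x, y})) := by
      rw [h2]; trivial
    have hle : Subgroup.closure ((e : H →* FreeGroup ι) '' (H.subtype ⁻¹' {x, y})) ≤
        Subgroup.comap ab (Subgroup.zpowers (ab (e x'))) := by
      rw [Subgroup.closure_le]
      rintro _ ⟨z, hz, rfl⟩
      simp only [Set.mem_preimage, Set.mem_insert_iff, Set.mem_singleton_iff] at hz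
      have hz' : z = x' ∨ z = y' := by
        rcases hz with hz | hz
        · exact Or.inl (Subtype.ext hz)
        · exact Or.inr (Subtype.ext hz)
      rcases hz' with rfl | rfl
      · exact Subgroup.mem_zpowers _
      · simp only [SetLike.mem_coe, Subgroup.mem_comap]
        show ab (e y') ∈ Subgroup.zpowers (ab (e x'))
        rw [← hab]
        exact Subgroup.mem_zpowers _
    exact hle hu
  -- the generator type is a subsingleton
  haveI hsub : Subsingleton ι := by
    constructor
    intro i j
    by_contra hij
    set a : ι →₀ ℤ := (ab (e x')).toAdd with ha
    obtain ⟨k, hk⟩ := hall (FreeGroup.of i)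
    obtain ⟨l, hl⟩ := hall (FreeGroup.of j)
    have hki : (k • a) = Finsupp.single i 1 := by
      have := congrArg Multiplicative.toAdd hk
      simpa [ab, FreeGroup.lift_apply_of, toAdd_zpow] using this
    have hlj : (l • a) = Finsupp.single j 1 := by
      have := congrArg Multiplicative.toAdd hl
      simpa [ab, FreeGroup.lift_apply_of, toAdd_zpow] using this
    have h1 : k * a i = 1 := by
      have := congrArg (fun f => f i) hki
      simpa [Finsupp.single_eq_same] using this
    have h2 : k * a j = 0 := by
      have := congrArg (fun f => f j) hki
      simpa [Finsupp.single_eq_of_ne' hij] using this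
    have h3 : l * a j = 1 := by
      have := congrArg (fun f => f j) hlj
      simpa [Finsupp.single_eq_same] using this
    have hk0 : k ≠ 0 := by
      intro h0; rw [h0, zero_mul] at h1; exact one_ne_zero h1.symm
    have haj : a j = 0 := by
      rcases mul_eq_zero.mp h2 with h | h
      · exact absurd h hk0
      · exact h
    rw [haj, mul_zero] at h3
    exact one_ne_zero h3.symm
  -- conclude
  have hexy : e x' = e y' := by
    rcases isEmpty_or_nonempty ι with hE | ⟨⟨i⟩⟩
    · haveI := FreeGroup.subsingleton_of_isEmpty (ι := ι)
      exact Subsingleton.elim _ _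
    · obtain ⟨k, hk⟩ := FreeGroup.exists_zpow_of_subsingleton i (e x')
      obtain ⟨l, hl⟩ := FreeGroup.exists_zpow_of_subsingleton i (e y')
      have hp : (FreeGroup.of i : FreeGroup ι) ^ (k * (n : ℤ)) =
          FreeGroup.of i ^ (l * (n : ℤ)) := by
        rw [zpow_mul, zpow_mul, ← hk, ← hl]
        have := congrArg e hxy'
        simp only [map_pow] at this
        exact_mod_cast this
      have := FreeGroup.of_zpow_injective i hp
      have hkl : k = l := by
        have hn' : (n : ℤ) ≠ 0 := by exact_mod_cast hn
        exact mul_right_cancel₀ hn' this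
      rw [hk, hl, hkl]
  have : x' = y' := e.injective hexy
  exact congrArg Subtype.val this

/-- If `F` is a finitely generated free group and `N < F` is a characteristic subgroup of
finite index, then the restriction map `Aut(F) → Aut(N)` is injective: two automorphisms of
`F` agreeing on `N` are equal. -/
theorem restriction_to_characteristic_finite_index_subgroup_injective
    (α : Type) [Finite α] (N : Subgroup (FreeGroup α)) [N.Characteristic] [N.FiniteIndex]
    (φ ψ : FreeGroup α ≃* FreeGroup α) (h : ∀ x ∈ N, φ x = ψ x) : φ = ψ := by
  apply MulEquiv.ext
  intro x
  have hmem : x ^ N.index ∈ N := Subgroup.pow_index_mem N x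
  have hpow : φ x ^ N.index = ψ x ^ N.index := by
    rw [← map_pow, ← map_pow]
    exact h _ hmem
  exact FreeGroup.pow_left_injective Subgroup.FiniteIndex.index_ne_zero hpow
end

section
/- In a free group F, if x^k = y^k for some k ≥ 1 and x, y ∈ F, then x = y (elements of free groups have unique k-th roots). -/
def Mag (α : Type) : Type := List α → ℚ

namespace Mag
variable {α : Type}

instance : AddCommGroup (Mag α) := Pi.addCommGroup

def conv (f g : Mag α) : Mag α :=
  fun w => ∑ i ∈ Finset.range (w.length + 1), f (w.take i) * g (w.drop i)

instance : One (Mag α) := ⟨fun w => match w with | [] => 1 | _ => 0⟩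
instance : Mul (Mag α) := ⟨conv⟩

theorem mul_apply (f g : Mag α) (w : List α) :
    (f * g) w = ∑ i ∈ Finset.range (w.length + 1), f (w.take i) * g (w.drop i) := rfl

theorem one_nil : (1 : Mag α) [] = 1 := rfl
theorem one_ne_nil {w : List α} (h : w ≠ []) : (1 : Mag α) w = 0 := by
  cases w with
  | nil => exact absurd rfl h
  | cons a t => rfl

theorem add_apply (f g : Mag α) (w : List α) : (f + g) w = f w + g w := rfl
theorem zero_apply (w : List α) : (0 : Mag α) w = 0 := rfl
theorem sub_apply (f g : Mag α) (w : List α) : (f - g) w = f w - g w := rfl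

private theorem triangle (n : ℕ) (F : ℕ → ℕ → ℚ) :
    ∑ j ∈ Finset.range (n+1), ∑ i ∈ Finset.range (j+1), F i j
      = ∑ i ∈ Finset.range (n+1), ∑ t ∈ Finset.range (n+1-i), F i (i+t) := by
  have h1 : ∀ j ∈ Finset.range (n+1), ∑ i ∈ Finset.range (j+1), F i j
      = ∑ i ∈ Finset.range (n+1), if i ≤ j then F i j else 0 := by
    intro j hj
    rw [Finset.mem_range] at hj
    rw [← Finset.sum_filter]
    congr 1
    ext i
    simp only [Finset.mem_filter, Finset.mem_range]
    omega
  rw [Finset.sum_congr rfl h1, Finset.sum_comm]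
  refine Finset.sum_congr rfl ?_
  intro i hi
  rw [Finset.mem_range] at hi
  rw [← Finset.sum_filter]
  have h2 : (Finset.range (n+1)).filter (fun j => i ≤ j) = Finset.Ico i (n+1) := by
    ext j; simp only [Finset.mem_filter, Finset.mem_range, Finset.mem_Ico]; omega
  rw [h2, Finset.sum_Ico_eq_sum_range]

private theorem mul_assoc' (f g h : Mag α) : f * g * h = f * (g * h) := by
  funext w
  set n := w.length with hn
  rw [mul_apply, mul_apply]
  calc ∑ j ∈ Finset.range (n+1), (f * g) (w.take j) * h (w.drop j)
      = ∑ j ∈ Finset.range (n+1), ∑ i ∈ Finset.range (j+1),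
          f (w.take i) * (g ((w.drop i).take (j - i)) * h (w.drop j)) := by
        refine Finset.sum_congr rfl ?_
        intro j hj
        rw [Finset.mem_range] at hj
        rw [mul_apply]
        have hlen : (w.take j).length = j := by
          rw [List.length_take]; omega
        rw [hlen, Finset.sum_mul]
        refine Finset.sum_congr rfl ?_
        intro i hi
        rw [Finset.mem_range] at hi
        have h1 : (w.take j).take i = w.take i := by
          rw [List.take_take, Nat.min_eq_left (by omega)]
        have h2 : (w.take j).drop i = (w.drop i).take (j - i) := by
          have h4 : i + (j - i) = j := by omega
          rw [List.take_drop, h4]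
        rw [h1, h2, mul_assoc]
    _ = ∑ i ∈ Finset.range (n+1), ∑ t ∈ Finset.range (n+1-i),
          f (w.take i) * (g ((w.drop i).take t) * h (w.drop (i+t))) := by
        rw [triangle n (fun i j => f (w.take i) * (g ((w.drop i).take (j - i)) * h (w.drop j)))]
        refine Finset.sum_congr rfl fun i _ => Finset.sum_congr rfl fun t _ => ?_
        rw [Nat.add_sub_cancel_left]
    _ = ∑ i ∈ Finset.range (n+1), f (w.take i) * (g * h) (w.drop i) := by
        refine Finset.sum_congr rfl ?_
        intro i hi
        rw [Finset.mem_range] at hi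
        rw [mul_apply, Finset.mul_sum]
        have hlen : (w.drop i).length = n - i := by rw [List.length_drop]
        rw [hlen]
        have h3 : n - i + 1 = n + 1 - i := by omega
        rw [h3]
        refine Finset.sum_congr rfl ?_
        intro t ht
        rw [List.drop_drop]

instance : Ring (Mag α) :=
  { (inferInstance : AddCommGroup (Mag α)) with
    mul_assoc := mul_assoc'
    one_mul := fun f => by
      funext w
      rw [mul_apply, Finset.sum_eq_single 0]
      · rw [List.take_zero, List.drop_zero, one_nil, one_mul]
      · intro i hi hne
        rw [Finset.mem_range] at hi
        have hne' : w.take i ≠ [] := by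
          intro hcon
          have hl : (w.take i).length = i := by rw [List.length_take]; omega
          rw [hcon] at hl
          exact hne hl.symm
        rw [one_ne_nil hne', zero_mul]
      · intro hmem; simp at hmem
    mul_one := fun f => by
      funext w
      rw [mul_apply, Finset.sum_eq_single w.length]
      · rw [List.take_length, List.drop_length, one_nil, mul_one]
      · intro i hi hne
        rw [Finset.mem_range] at hi
        have hne' : w.drop i ≠ [] := by
          intro hcon
          have hl := congrArg List.length hcon
          rw [List.length_drop] at hl
          simp at hl
          omega
        rw [one_ne_nil hne', mul_zero]
      · intro hmem; simp at hmem
    left_distrib := fun f g h => by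
      funext w
      rw [mul_apply, add_apply, mul_apply, mul_apply, ← Finset.sum_add_distrib]
      exact Finset.sum_congr rfl fun i _ => by rw [add_apply, mul_add]
    right_distrib := fun f g h => by
      funext w
      rw [mul_apply, add_apply, mul_apply, mul_apply, ← Finset.sum_add_distrib]
      exact Finset.sum_congr rfl fun i _ => by rw [add_apply, add_mul]
    zero_mul := fun f => by
      funext w
      rw [mul_apply, zero_apply]
      exact Finset.sum_eq_zero fun i _ => by rw [zero_apply, zero_mul]
    mul_zero := fun f => by
      funext w
      rw [mul_apply, zero_apply]
      exact Finset.sum_eq_zero fun i _ => by rw [zero_apply, mul_zero] }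


open Classical in
noncomputable def X (a : α) : Mag α := fun w => if w = [a] then 1 else 0

open Classical in
noncomputable def geo (a : α) : Mag α :=
  fun w => if w = List.replicate w.length a then (-1) ^ w.length else 0

theorem X_apply_ne {a : α} {w : List α} (h : w ≠ [a]) : X a w = 0 := by
  simp [X, h]

theorem X_apply_self (a : α) : X a [a] = 1 := by simp [X]

theorem geo_nil (a : α) : geo a [] = 1 := by simp [geo]

theorem geo_rep (a : α) (n : ℕ) : geo a (List.replicate n a) = (-1) ^ n := by
  simp [geo]

theorem geo_apply_ne {a : α} {w : List α} (h : w ≠ List.replicate w.length a) :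
    geo a w = 0 := by simp [geo, h]

/-- key: `take i w = [a]` forces `i = 1` (given `i` in range). -/
private theorem take_eq_single {a : α} {w : List α} {i : ℕ} (hi : i < w.length + 1)
    (h : w.take i = [a]) : i = 1 := by
  have hl := congrArg List.length h
  rw [List.length_take] at hl
  simp at hl
  omega

private theorem drop_eq_single {a : α} {w : List α} {i : ℕ}
    (h : w.drop i = [a]) : i = w.length - 1 ∧ 1 ≤ w.length := by
  have hl := congrArg List.length h
  rw [List.length_drop] at hl
  simp at hl
  omega

theorem X_mul_nil (a : α) (g : Mag α) : (X a * g) [] = 0 := by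
  rw [mul_apply]
  simp only [List.length_nil]
  rw [Finset.sum_range_one, X_apply_ne (by simp), zero_mul]

open Classical in
theorem X_mul_cons (a b : α) (g : Mag α) (t : List α) :
    (X a * g) (b :: t) = if b = a then g t else 0 := by
  rw [mul_apply, Finset.sum_eq_single 1]
  · have h1 : (b :: t).take 1 = [b] := rfl
    have h2 : (b :: t).drop 1 = t := rfl
    rw [h1, h2]
    by_cases hb : b = a
    · subst hb; rw [X_apply_self, one_mul, if_pos rfl]
    · rw [X_apply_ne (by simp [hb]), zero_mul, if_neg hb]
  · intro i hi hne
    rw [Finset.mem_range] at hi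
    rw [X_apply_ne, zero_mul]
    intro hcon
    exact hne (take_eq_single hi hcon)
  · intro hmem; simp at hmem

open Classical in
theorem mul_X_apply (a : α) (g : Mag α) (w : List α) (hw : w ≠ []) :
    (g * X a) w =
      (if w.drop (w.length - 1) = [a] then g (w.take (w.length - 1)) else 0 : ℚ) := by
  rw [mul_apply, Finset.sum_eq_single (w.length - 1)]
  · by_cases hc : w.drop (w.length - 1) = [a]
    · rw [hc, X_apply_self, mul_one, if_pos rfl]
    · rw [X_apply_ne hc, mul_zero, if_neg hc]
  · intro i hi hne
    rw [Finset.mem_range] at hi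
    rw [X_apply_ne, mul_zero]
    intro hcon
    exact hne (drop_eq_single hcon).1
  · intro hmem
    rw [Finset.mem_range] at hmem
    have : w.length ≠ 0 := fun h => hw (List.length_eq_zero_iff.mp h)
    omega

theorem mul_apply_nil (f g : Mag α) : (f * g) [] = f [] * g [] := by
  rw [mul_apply]
  simp only [List.length_nil]
  rw [Finset.sum_range_one]
  rfl

theorem mul_apply_single (f g : Mag α) (a : α) :
    (f * g) [a] = f [] * g [a] + f [a] * g [] := by
  rw [mul_apply]
  simp only [List.length_singleton]
  rw [Finset.sum_range_succ, Finset.sum_range_one]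
  rfl

/-- The generator unit `1 + X a` with inverse the geometric series. -/
noncomputable def ua (a : α) : (Mag α)ˣ where
  val := 1 + X a
  inv := geo a
  val_inv := by
    funext w
    rw [add_mul, one_mul, add_apply]
    cases w with
    | nil => rw [X_mul_nil, geo_nil, one_nil, add_zero]
    | cons b t =>
      rw [X_mul_cons, one_ne_nil (List.cons_ne_nil b t)]
      by_cases hb : b = a
      · rw [if_pos hb, hb]
        by_cases ht : t = List.replicate t.length a
        · have h1 : a :: t = List.replicate (t.length + 1) a := by
            rw [List.replicate_succ, ← ht]
        -- values
          rw [show geo a (a :: t) = (-1 : ℚ) ^ (t.length + 1) from h1 ▸ geo_rep a (t.length + 1),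
            ht, geo_rep, List.length_replicate]
          ring
        · rw [geo_apply_ne ht, geo_apply_ne, add_zero]
          intro hcon
          apply ht
          rw [show (a :: t).length = t.length + 1 from rfl, List.replicate_succ] at hcon
          exact (List.cons.injEq _ _ _ _ ▸ hcon).2
      · rw [if_neg hb, add_zero, geo_apply_ne]
        intro hcon
        rw [show (b :: t).length = t.length + 1 from rfl, List.replicate_succ] at hcon
        exact hb (List.cons.injEq _ _ _ _ ▸ hcon).1
  inv_val := by
    funext w
    rw [mul_add, mul_one, add_apply]
    cases w with
    | nil =>
      rw [geo_nil, one_nil]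
      have h0 : (geo a * X a) ([] : List α) = 0 := by
        rw [mul_apply]
        simp only [List.length_nil]
        rw [Finset.sum_range_one, X_apply_ne (by simp), mul_zero]
      rw [h0, add_zero]
    | cons b t =>
      rw [mul_X_apply _ _ _ (List.cons_ne_nil b t), one_ne_nil (List.cons_ne_nil b t)]
      set w := b :: t with hw
      have hlen : w.length = t.length + 1 := rfl
      by_cases hrep : w = List.replicate w.length a
      · have hd : w.drop (w.length - 1) = [a] := by
          rw [hrep, List.drop_replicate, hlen]
          simp
        have htk : w.take (w.length - 1) = List.replicate t.length a := by
          rw [hrep, List.take_replicate, hlen]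
          simp
        have hgw : geo a w = (-1 : ℚ) ^ w.length := by
          nth_rewrite 1 [hrep]
          exact geo_rep a w.length
        rw [if_pos hd, htk, geo_rep, hgw, hlen]
        ring
      · rw [geo_apply_ne hrep]
        by_cases hd : w.drop (w.length - 1) = [a]
        · have hne2 : w.take (w.length - 1) ≠
              List.replicate (w.take (w.length - 1)).length a := by
            intro hcon
            apply hrep
            have hlt : (w.take (w.length - 1)).length = w.length - 1 := by
              rw [List.length_take]; omega
            rw [hlt] at hcon
            calc w = w.take (w.length - 1) ++ w.drop (w.length - 1) :=
                  (List.take_append_drop _ _).symm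
              _ = List.replicate (w.length - 1) a ++ [a] := by rw [hcon, hd]
              _ = List.replicate (w.length - 1 + 1) a := List.replicate_succ'.symm
              _ = List.replicate w.length a := by
                  rw [show w.length - 1 + 1 = w.length from by omega]
          rw [if_pos hd, geo_apply_ne hne2, add_zero]
        · rw [if_neg hd, add_zero]

/-- The Magnus homomorphism. -/
noncomputable def mu : FreeGroup α →* (Mag α)ˣ := FreeGroup.lift ua

theorem mu_of (a : α) : mu (FreeGroup.of a) = ua a := FreeGroup.lift_apply_of

/-- augmentation: the constant coefficient of any Magnus image is 1. -/
theorem aug (x : FreeGroup α) : ((mu x : (Mag α)ˣ) : Mag α) [] = 1 := by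
  induction x using FreeGroup.induction_on with
  | C1 => rw [map_one]; exact one_nil
  | of a =>
    rw [mu_of]
    show ((1 + X a : Mag α)) [] = 1
    rw [add_apply, one_nil, X_apply_ne (by simp), add_zero]
  | inv_of a _ =>
    rw [map_inv, mu_of]
    show geo a [] = 1
    exact geo_nil a
  | mul x y hx hy =>
    rw [map_mul]
    show ((mu x : Mag α) * (mu y : Mag α)) [] = 1
    rw [mul_apply_nil, hx, hy, one_mul]

/-- first-order coefficient as additive character -/
theorem coeff_mul (a : α) (x y : FreeGroup α) :
    ((mu (x * y) : (Mag α)ˣ) : Mag α) [a]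
      = ((mu x : (Mag α)ˣ) : Mag α) [a] + ((mu y : (Mag α)ˣ) : Mag α) [a] := by
  rw [map_mul]
  show ((mu x : Mag α) * (mu y : Mag α)) [a] = _
  rw [mul_apply_single, aug, aug, one_mul, mul_one, add_comm]

theorem coeff_one (a : α) : ((mu (1 : FreeGroup α) : (Mag α)ˣ) : Mag α) [a] = 0 := by
  rw [map_one]
  show (1 : Mag α) [a] = 0
  exact one_ne_nil (by simp)

theorem coeff_inv (a : α) (x : FreeGroup α) :
    ((mu x⁻¹ : (Mag α)ˣ) : Mag α) [a] = -((mu x : (Mag α)ˣ) : Mag α) [a] := by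
  have h := coeff_mul a x x⁻¹
  rw [mul_inv_cancel, coeff_one] at h
  linarith

theorem coeff_pow (a : α) (x : FreeGroup α) (n : ℕ) :
    ((mu (x ^ n) : (Mag α)ˣ) : Mag α) [a] = n * ((mu x : (Mag α)ˣ) : Mag α) [a] := by
  induction n with
  | zero => rw [pow_zero, coeff_one]; simp
  | succ n ih =>
    rw [pow_succ, coeff_mul, ih]
    push_cast
    ring

theorem coeff_zpow (a : α) (x : FreeGroup α) (m : ℤ) :
    ((mu (x ^ m) : (Mag α)ˣ) : Mag α) [a] = m * ((mu x : (Mag α)ˣ) : Mag α) [a] := by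
  cases m with
  | ofNat n => rw [Int.ofNat_eq_coe, zpow_natCast, coeff_pow]; push_cast; ring
  | negSucc n =>
    rw [zpow_negSucc, coeff_inv, coeff_pow]
    push_cast
    ring

theorem coeff_of (a : α) : ((mu (FreeGroup.of a) : (Mag α)ˣ) : Mag α) [a] = 1 := by
  rw [mu_of]
  show ((1 + X a : Mag α)) [a] = 1
  rw [add_apply, one_ne_nil (by simp), X_apply_self, zero_add]

/-- P2: coefficient of `[a]` in `mu (of a ^ m)` is `m`. -/
theorem coeff_of_zpow (a : α) (m : ℤ) :
    ((mu (FreeGroup.of a ^ m) : (Mag α)ˣ) : Mag α) [a] = m := by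
  rw [coeff_zpow, coeff_of, mul_one]

/-- support contained in powers of a single letter -/
def SuppRep (a : α) (f : Mag α) : Prop :=
  ∀ w : List α, f w ≠ 0 → w = List.replicate w.length a

theorem suppRep_mul {a : α} {f g : Mag α} (hf : SuppRep a f) (hg : SuppRep a g) :
    SuppRep a (f * g) := by
  intro w hw
  rw [mul_apply] at hw
  obtain ⟨i, hi, hterm⟩ := Finset.exists_ne_zero_of_sum_ne_zero hw
  rw [Finset.mem_range] at hi
  have hf' : w.take i = List.replicate (w.take i).length a :=
    hf _ (fun hz => hterm (by rw [hz, zero_mul]))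
  have hg' : w.drop i = List.replicate (w.drop i).length a :=
    hg _ (fun hz => hterm (by rw [hz, mul_zero]))
  have hlt : (w.take i).length = i := by rw [List.length_take]; omega
  have hld : (w.drop i).length = w.length - i := List.length_drop
  calc w = w.take i ++ w.drop i := (List.take_append_drop _ _).symm
    _ = List.replicate i a ++ List.replicate (w.length - i) a := by
        rw [hf', hg', hlt, hld]
    _ = List.replicate (i + (w.length - i)) a := (List.replicate_add _ _ _).symm
    _ = List.replicate w.length a := by rw [show i + (w.length - i) = w.length from by omega]

theorem suppRep_one (a : α) : SuppRep a (1 : Mag α) := by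
  intro w hw
  cases w with
  | nil => rfl
  | cons b t => exact absurd (one_ne_nil (by simp)) hw

theorem suppRep_ua (a : α) : SuppRep a ((ua a : (Mag α)ˣ) : Mag α) := by
  intro w hw
  show w = _
  by_cases h1 : w = []
  · rw [h1]; rfl
  by_cases h2 : w = [a]
  · rw [h2]; rfl
  exfalso
  apply hw
  show ((1 + X a : Mag α)) w = 0
  rw [add_apply, one_ne_nil h1, X_apply_ne h2, add_zero]

theorem suppRep_geo (a : α) : SuppRep a (geo a) := by
  intro w hw
  by_contra hcon
  exact hw (geo_apply_ne hcon)

theorem suppRep_pow {a : α} {f : Mag α} (hf : SuppRep a f) (n : ℕ) : SuppRep a (f ^ n) := by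
  induction n with
  | zero => rw [pow_zero]; exact suppRep_one a
  | succ n ih => rw [pow_succ]; exact suppRep_mul ih hf

/-- P1 -/
theorem suppRep_of_zpow (a : α) (m : ℤ) :
    SuppRep a ((mu (FreeGroup.of a ^ m) : (Mag α)ˣ) : Mag α) := by
  cases m with
  | ofNat n =>
    rw [Int.ofNat_eq_coe, zpow_natCast, map_pow]
    rw [Units.val_pow_eq_pow_val, mu_of]
    exact suppRep_pow (suppRep_ua a) n
  | negSucc n =>
    rw [zpow_negSucc, map_inv, map_pow, ← inv_pow]
    rw [Units.val_pow_eq_pow_val, mu_of]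
    have : ((ua a)⁻¹ : (Mag α)ˣ).val = geo a := rfl
    rw [this]
    exact suppRep_pow (suppRep_geo a) (n + 1)

theorem aug_pow {u : Mag α} (hu : u [] = 1) (j : ℕ) : (u ^ j) [] = 1 := by
  induction j with
  | zero => rw [pow_zero]; exact one_nil
  | succ j ih => rw [pow_succ, mul_apply_nil, ih, hu, one_mul]

theorem agree_pow {u v : Mag α} {N : ℕ}
    (h : ∀ w : List α, w.length < N → u w = v w) (j : ℕ) :
    ∀ w : List α, w.length < N → (u ^ j) w = (v ^ j) w := by
  induction j with
  | zero => intro w _; rfl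
  | succ j ih =>
    intro w hw
    rw [pow_succ, pow_succ, mul_apply, mul_apply]
    refine Finset.sum_congr rfl ?_
    intro i hi
    rw [Finset.mem_range] at hi
    have h1 : (w.take i).length < N := by
      rw [List.length_take]; omega
    have h2 : (w.drop i).length < N := by
      rw [List.length_drop]; omega
    rw [ih _ h1, h _ h2]

theorem pow_diff {u v : Mag α} (hu : u [] = 1) (hv : v [] = 1) {w : List α} (hw : w ≠ [])
    (hagree : ∀ w' : List α, w'.length < w.length → u w' = v w') (j : ℕ) :
    (u ^ j) w - (v ^ j) w = j * (u w - v w) := by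
  induction j with
  | zero => simp
  | succ j ih =>
    obtain ⟨b, t, rfl⟩ := List.exists_cons_of_ne_nil hw
    set n := (b :: t).length with hn
    have hn1 : n = t.length + 1 := rfl
    have expand : ∀ z : Mag α, z [] = 1 →
        (z ^ (j+1)) (b :: t) = (z ^ j) (b :: t) + z (b :: t)
          + ∑ i ∈ Finset.range t.length,
              z ((b :: t).take (i+1)) * (z ^ j) ((b :: t).drop (i+1)) := by
      intro z hz
      rw [pow_succ', mul_apply, ← hn]
      rw [show n + 1 = (t.length + 1) + 1 from by rw [hn1]]
      rw [Finset.sum_range_succ, Finset.sum_range_succ']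
      have e0 : (b :: t).take 0 = [] := rfl
      have e1 : (b :: t).drop 0 = b :: t := rfl
      have e2 : (b :: t).take (t.length + 1) = b :: t := by
        rw [show t.length + 1 = (b :: t).length from rfl, List.take_length]
      have e3 : (b :: t).drop (t.length + 1) = [] := by
        rw [show t.length + 1 = (b :: t).length from rfl, List.drop_length]
      rw [e0, e1, e2, e3, hz, one_mul, aug_pow hz, mul_one]
      ring
    rw [expand u hu, expand v hv]
    have hmid : ∀ i ∈ Finset.range t.length,
        u ((b :: t).take (i+1)) * (u ^ j) ((b :: t).drop (i+1))
          = v ((b :: t).take (i+1)) * (v ^ j) ((b :: t).drop (i+1)) := by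
      intro i hi
      rw [Finset.mem_range] at hi
      have l1 : ((b :: t).take (i+1)).length < n := by
        rw [List.length_take]; omega
      have l2 : ((b :: t).drop (i+1)).length < n := by
        rw [List.length_drop]; omega
      rw [hagree _ l1, agree_pow hagree j _ l2]
    have hsum := Finset.sum_congr rfl hmid
    push_cast
    push_cast at ih ⊢
    linear_combination ih + hsum

/-- Unique roots for augmentation-1 elements of `Mag α`. -/
theorem pow_cancel {u v : Mag α} (hu : u [] = 1) (hv : v [] = 1) {k : ℕ} (hk : 1 ≤ k)
    (h : u ^ k = v ^ k) : u = v := by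
  funext w
  suffices H : ∀ n : ℕ, ∀ w : List α, w.length ≤ n → u w = v w by
    exact H w.length w le_rfl
  intro n
  induction n with
  | zero =>
    intro w hw
    rw [List.length_eq_zero_iff.mp (Nat.le_zero.mp hw)]
    rw [hu, hv]
  | succ n ih =>
    intro w hw
    rcases Nat.lt_or_ge w.length (n+1) with hlt | hge
    · exact ih w (by omega)
    have hwlen : w.length = n + 1 := by omega
    have hwne : w ≠ [] := by
      intro hcon
      rw [hcon] at hwlen
      simp at hwlen
    have hagree : ∀ w' : List α, w'.length < w.length → u w' = v w' := by
      intro w' hw'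
      exact ih w' (by omega)
    have hd := pow_diff hu hv hwne hagree k
    rw [h, sub_self] at hd
    have hk0 : (k : ℚ) ≠ 0 := Nat.cast_ne_zero.mpr (by omega)
    have hd2 : (k : ℚ) * (u w - v w) = 0 := hd.symm
    rcases mul_eq_zero.mp hd2 with h1 | h2
    · exact absurd h1 hk0
    · exact sub_eq_zero.mp h2

/-! ### Blocks of a reduced word -/

open Classical in
noncomputable def consBlock (p : α × Bool) : List ((α × Bool) × ℕ) → List ((α × Bool) × ℕ)
  | [] => [(p, 1)]
  | (q, m) :: r => if p = q then (q, m + 1) :: r else (p, 1) :: (q, m) :: r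

open Classical in
theorem consBlock_nil (p : α × Bool) : consBlock p [] = [(p, 1)] := rfl

open Classical in
theorem consBlock_cons (p q : α × Bool) (m : ℕ) (r : List ((α × Bool) × ℕ)) :
    consBlock p ((q, m) :: r) =
      if p = q then (q, m + 1) :: r else (p, 1) :: (q, m) :: r := rfl

noncomputable def blocks : List (α × Bool) → List ((α × Bool) × ℕ)
  | [] => []
  | p :: t => consBlock p (blocks t)

theorem blocks_nil : blocks ([] : List (α × Bool)) = [] := rfl
theorem blocks_cons (p : α × Bool) (t : List (α × Bool)) :
    blocks (p :: t) = consBlock p (blocks t) := rfl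

theorem blocks_cons_fst (p : α × Bool) (t : List (α × Bool)) :
    ∃ m r, blocks (p :: t) = (p, m) :: r ∧ 1 ≤ m := by
  classical
  rw [blocks_cons]
  rcases h : blocks t with _ | ⟨⟨q, m⟩, r⟩
  · exact ⟨1, [], consBlock_nil p, le_refl 1⟩
  · rw [consBlock_cons]
    by_cases hpq : p = q
    · subst hpq
      exact ⟨m + 1, r, by rw [if_pos rfl], by omega⟩
    · exact ⟨1, (q, m) :: r, by rw [if_neg hpq], le_refl 1⟩

theorem blocks_flatten (L : List (α × Bool)) :
    ((blocks L).map fun q => List.replicate q.2 q.1).flatten = L := by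
  classical
  induction L with
  | nil => rfl
  | cons p t ih =>
    rw [blocks_cons]
    rcases h : blocks t with _ | ⟨⟨q, m⟩, r⟩
    · rw [h] at ih
      simp at ih
      rw [consBlock_nil]
      simp [ih.symm]
    · rw [h] at ih
      rw [consBlock_cons]
      by_cases hpq : p = q
      · subst hpq
        rw [if_pos rfl]
        simp only [List.map_cons, List.flatten_cons] at ih ⊢
        rw [List.replicate_succ, List.cons_append, ih]
      · rw [if_neg hpq]
        simp only [List.map_cons, List.flatten_cons] at ih ⊢
        rw [List.replicate_one, List.singleton_append, ih]

/-- reduced-word compatibility relation -/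
def RedRel (p q : α × Bool) : Prop := p.1 = q.1 → p.2 = q.2

theorem blocks_chain {L : List (α × Bool)} (h : List.Chain' RedRel L) :
    List.Chain' (fun P Q : (α × Bool) × ℕ => P.1.1 ≠ Q.1.1) (blocks L) := by
  classical
  induction L with
  | nil => exact List.isChain_nil
  | cons p t ih =>
    have ht : List.Chain' RedRel t := h.tail
    have hih := ih ht
    rw [blocks_cons]
    rcases hb : blocks t with _ | ⟨⟨q, m⟩, r⟩
    · rw [consBlock_nil]; exact List.isChain_singleton _
    · rw [hb] at hih
      rw [consBlock_cons]
      have hqt : t.head? = some q := by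
        cases t with
        | nil => exact absurd hb (by rw [blocks_nil]; simp)
        | cons p' t' =>
          obtain ⟨m', r', hb', _⟩ := blocks_cons_fst p' t'
          rw [hb'] at hb
          have h1 : (p', m') = (q, m) := by injection hb
          have h2 : p' = q := congrArg Prod.fst h1
          rw [List.head?_cons, h2]
      have hpq' : RedRel p q := (List.isChain_cons.mp h).1 q hqt
      by_cases hpq : p = q
      · subst hpq
        rw [if_pos rfl]
        exact List.isChain_cons.mpr ⟨(List.isChain_cons.mp hih).1, (List.isChain_cons.mp hih).2⟩
      · rw [if_neg hpq]
        refine List.isChain_cons_cons.mpr ⟨?_, hih⟩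
        intro hfst
        exact hpq (Prod.ext hfst (hpq' hfst))

theorem blocks_pos {L : List (α × Bool)} : ∀ q ∈ blocks L, 1 ≤ q.2 := by
  classical
  induction L with
  | nil => intro q hq; exact absurd hq (by simp [blocks_nil])
  | cons p t ih =>
    rw [blocks_cons]
    rcases hb : blocks t with _ | ⟨⟨q, m⟩, r⟩
    · rw [consBlock_nil]
      intro x hx
      simp at hx
      rw [hx]
    · rw [hb] at ih
      rw [consBlock_cons]
      by_cases hpq : p = q
      · subst hpq
        rw [if_pos rfl]
        intro x hx
        rcases List.mem_cons.mp hx with h1 | h2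
        · rw [h1]; omega
        · exact ih x (List.mem_cons_of_mem _ h2)
      · rw [if_neg hpq]
        intro x hx
        rcases List.mem_cons.mp hx with h1 | h2
        · rw [h1]
        · exact ih x h2

/-! ### the key coefficient computations -/

def sgnz (q : (α × Bool) × ℕ) : ℤ := if q.1.2 then (q.2 : ℤ) else -(q.2 : ℤ)

noncomputable def eltB (bl : List ((α × Bool) × ℕ)) : FreeGroup α :=
  (bl.map fun q => FreeGroup.of q.1.1 ^ sgnz q).prod

theorem eltB_nil : eltB ([] : List ((α × Bool) × ℕ)) = 1 := rfl

theorem eltB_cons (q : (α × Bool) × ℕ) (r : List ((α × Bool) × ℕ)) :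
    eltB (q :: r) = FreeGroup.of q.1.1 ^ sgnz q * eltB r := by
  simp [eltB]

/-- Lemma A : coefficients on squarefree words longer than the number of blocks vanish. -/
theorem lemA : ∀ bl : List ((α × Bool) × ℕ), ∀ v : List α,
    List.Chain' (· ≠ ·) v → bl.length < v.length →
    ((mu (eltB bl) : (Mag α)ˣ) : Mag α) v = 0 := by
  intro bl
  induction bl with
  | nil =>
    intro v _ hlen
    rw [eltB_nil, map_one, Units.val_one]
    apply one_ne_nil
    intro hcon
    rw [hcon] at hlen
    simp at hlen
  | cons q rest ih =>
    intro v hchain hlen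
    rw [eltB_cons, map_mul, Units.val_mul, mul_apply]
    apply Finset.sum_eq_zero
    intro i hi
    rw [Finset.mem_range] at hi
    set a := q.1.1 with ha
    by_cases hrep : v.take i = List.replicate i a
    · -- i ≤ 1, so the second factor dies by induction
      have hile : i ≤ 1 := by
        by_contra hgt
        obtain ⟨j, rfl⟩ : ∃ j, i = j + 2 := ⟨i - 2, by omega⟩
        have hv : v = a :: a :: (List.replicate j a ++ v.drop (j + 2)) := by
          conv_lhs => rw [← List.take_append_drop (j + 2) v]
          rw [hrep]
          simp [List.replicate_succ]
        rw [hv] at hchain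
        exact (List.isChain_cons_cons.mp hchain).1 rfl
      have hch2 : List.Chain' (· ≠ ·) (v.drop i) := by
        interval_cases i
        · exact hchain
        · rw [List.drop_one]; exact hchain.tail
      have hlen2 : rest.length < (v.drop i).length := by
        rw [List.length_drop]
        have : (q :: rest).length = rest.length + 1 := rfl
        omega
      rw [ih (v.drop i) hch2 hlen2, mul_zero]
    · -- first factor dies by the support property
      have h0 : ((mu (FreeGroup.of a ^ sgnz q) : (Mag α)ˣ) : Mag α) (v.take i) = 0 := by
        by_contra hne
        apply hrep
        have := suppRep_of_zpow a (sgnz q) (v.take i) hne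
        rwa [List.length_take, Nat.min_eq_left (by omega)] at this
      rw [h0, zero_mul]

/-- Lemma B : the coefficient on the block letters is the product of the signed exponents. -/
theorem lemB : ∀ bl : List ((α × Bool) × ℕ),
    List.Chain' (fun P Q : (α × Bool) × ℕ => P.1.1 ≠ Q.1.1) bl →
    ((mu (eltB bl) : (Mag α)ˣ) : Mag α) (bl.map fun q => q.1.1)
      = (bl.map fun q => ((sgnz q : ℤ) : ℚ)).prod := by
  intro bl
  induction bl with
  | nil =>
    intro _
    rw [eltB_nil, map_one, Units.val_one]
    rw [List.map_nil, List.map_nil, List.prod_nil, one_nil]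
  | cons q rest ih =>
    intro hchain
    set a := q.1.1 with ha
    set ls : List α := rest.map fun q => q.1.1 with hls
    have hlsl : ls.length = rest.length := by rw [hls, List.length_map]
    rw [eltB_cons, map_mul, Units.val_mul]
    have hmap : ((q :: rest).map fun q => q.1.1) = a :: ls := rfl
    rw [hmap, mul_apply]
    have hlength : (a :: ls).length = rest.length + 1 := by
      rw [List.length_cons, hlsl]
    rw [hlength]
    rw [Finset.sum_eq_single 1]
    · have e1 : (a :: ls).take 1 = [a] := rfl
      have e2 : (a :: ls).drop 1 = ls := rfl
      rw [e1, e2, coeff_of_zpow, ih hchain.tail]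
      rw [List.map_cons, List.prod_cons]
    · intro i hi hne
      rw [Finset.mem_range] at hi
      rcases Nat.lt_or_ge i 1 with h1 | h2
      · -- i = 0
        have : i = 0 := by omega
        subst this
        have e1 : (a :: ls).take 0 = [] := rfl
        have e2 : (a :: ls).drop 0 = a :: ls := rfl
        rw [e1, e2, aug, one_mul]
        apply lemA rest (a :: ls)
        · refine List.isChain_cons.mpr ⟨?_, ?_⟩
          · intro y hy
            rcases rest with _ | ⟨q2, rest2⟩
            · simp [hls] at hy
            · have : ls = q2.1.1 :: (rest2.map fun q => q.1.1) := rfl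
              rw [this, List.head?_cons] at hy
              have hy' : y = q2.1.1 := by injection hy with h; exact h.symm
              rw [hy']
              exact (List.isChain_cons_cons.mp hchain).1
          · exact (List.isChain_map _).mpr hchain.tail
        · rw [hlength]; omega
      · -- i ≥ 2
        have h2' : 2 ≤ i := by omega
        have h0 : ((mu (FreeGroup.of a ^ sgnz q) : (Mag α)ˣ) : Mag α) ((a :: ls).take i) = 0 := by
          by_contra hne0
          have hsupp := suppRep_of_zpow a (sgnz q) _ hne0
          have hlt : ((a :: ls).take i).length = i := by
            rw [List.length_take, hlength]
            omega
          rw [hlt] at hsupp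
          obtain ⟨j, rfl⟩ : ∃ j, i = j + 2 := ⟨i - 2, by omega⟩
          rcases rest with _ | ⟨q2, rest2⟩
          · simp [hls] at hlt
          · have hlshape : ls = q2.1.1 :: (rest2.map fun q => q.1.1) := rfl
            have e3 : (a :: ls).take (j + 2) = a :: q2.1.1 :: ((rest2.map fun q => q.1.1).take j) := by
              rw [hlshape]
              rfl
            rw [e3] at hsupp
            have : q2.1.1 = a := by
              rw [List.replicate_succ, List.replicate_succ] at hsupp
              injection hsupp with _ h'
              injection h' with h'' _
            exact (List.isChain_cons_cons.mp hchain).1 this.symm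
        rw [h0, zero_mul]
    · intro hmem
      rw [Finset.mem_range] at hmem
      omega

/-! ### reduced words are `RedRel` chains -/

private theorem chain'_of_no_bad {A : Type} {R : A → A → Prop} :
    ∀ L : List A, (∀ L2 L3 p q, L = L2 ++ p :: q :: L3 → R p q) → List.Chain' R L := by
  intro L
  induction L with
  | nil => intro _; exact List.isChain_nil
  | cons p t ih =>
    intro h
    rcases t with _ | ⟨q, t'⟩
    · exact List.isChain_singleton p
    · refine List.isChain_cons_cons.mpr ⟨h [] t' p q rfl, ?_⟩
      apply ih
      intro L2 L3 p' q' ht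
      exact h (p :: L2) L3 p' q' (by rw [ht]; rfl)

theorem chain_toWord [DecidableEq α] (x : FreeGroup α) : List.Chain' RedRel x.toWord := by
  apply chain'_of_no_bad
  intro L2 L3 p q heq
  intro hfst
  by_contra hsnd
  have hq : q = (p.1, !p.2) := by
    rcases p with ⟨pa, pb⟩
    rcases q with ⟨qa, qb⟩
    simp only at hfst hsnd ⊢
    subst hfst
    cases pb <;> cases qb <;> simp_all
  apply FreeGroup.reduce.not (L₁ := x.toWord) (L₂ := L2) (L₃ := L3) (x := p.1) (b := p.2)
  rw [FreeGroup.reduce_toWord, heq, hq]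

theorem eltB_eq_mk (bl : List ((α × Bool) × ℕ)) :
    eltB bl = FreeGroup.mk ((bl.map fun q => List.replicate q.2 q.1).flatten) := by
  classical
  induction bl with
  | nil => rw [eltB_nil]; exact FreeGroup.one_eq_mk
  | cons q r ih =>
    rw [eltB_cons, ih, List.map_cons, List.flatten_cons, ← FreeGroup.mul_mk]
    congr 1
    rcases q with ⟨⟨a, b⟩, m⟩
    show FreeGroup.of a ^ sgnz ((a, b), m) = FreeGroup.mk (List.replicate m (a, b))
    cases b
    · have hs : sgnz ((a, false), m) = -(m : ℤ) := rfl
      rw [hs, zpow_neg, zpow_natCast]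
      rw [show FreeGroup.of a ^ m = FreeGroup.mk (List.replicate m (a, true)) from by
        rw [← FreeGroup.toWord_of_pow, FreeGroup.mk_toWord]]
      rw [FreeGroup.inv_mk]
      congr 1
      show FreeGroup.invRev _ = _
      rw [FreeGroup.invRev, List.map_replicate, List.reverse_replicate]
      simp
    · have hs : sgnz ((a, true), m) = (m : ℤ) := rfl
      rw [hs, zpow_natCast]
      rw [← FreeGroup.toWord_of_pow, FreeGroup.mk_toWord]

theorem mu_ne_one {z : FreeGroup α} (hz : z ≠ 1) : mu z ≠ 1 := by
  classical
  have hL : z.toWord ≠ [] := fun h => hz (FreeGroup.toWord_eq_nil_iff.mp h)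
  set bl := blocks z.toWord with hbldef
  have hbl : bl ≠ [] := by
    rcases hw : z.toWord with _ | ⟨p, t⟩
    · exact absurd hw hL
    · obtain ⟨m, r, hb, _⟩ := blocks_cons_fst p t
      rw [hbldef, hw, hb]
      simp
  have helt : eltB bl = z := by
    rw [eltB_eq_mk, hbldef, blocks_flatten, FreeGroup.mk_toWord]
  intro hone
  have hchain := blocks_chain (chain_toWord z)
  have hb := lemB bl hchain
  rw [helt, hone, Units.val_one] at hb
  have hlhs : (1 : Mag α) (bl.map fun q => q.1.1) = 0 := by
    apply one_ne_nil
    intro hcon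
    exact hbl (List.map_eq_nil_iff.mp hcon)
  rw [hlhs] at hb
  have hrhs : (bl.map fun q => ((sgnz q : ℤ) : ℚ)).prod ≠ 0 := by
    apply List.prod_ne_zero
    intro hx
    rw [List.mem_map] at hx
    obtain ⟨q, hq, hq0⟩ := hx
    have hpos := blocks_pos q hq
    have hsg : sgnz q ≠ 0 := by
      rw [sgnz]
      rcases q with ⟨⟨c, b⟩, m⟩
      simp only at hpos ⊢
      cases b <;> simp <;> omega
    exact hsg (by exact_mod_cast hq0)
  exact hrhs hb.symm

end Mag

/-- In a free group, elements have unique `k`-th roots: if `x ^ k = y ^ k` with `k ≥ 1`,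
then `x = y`. -/
theorem freeGroup_unique_roots (α : Type) (x y : FreeGroup α) (k : ℕ) (hk : 1 ≤ k)
    (h : x ^ k = y ^ k) : x = y := by
  have h1 : Mag.mu x ^ k = Mag.mu y ^ k := by
    rw [← map_pow, ← map_pow, h]
  have h2 : ((Mag.mu x : (Mag α)ˣ) : Mag α) ^ k = ((Mag.mu y : (Mag α)ˣ) : Mag α) ^ k := by
    rw [← Units.val_pow_eq_pow_val, ← Units.val_pow_eq_pow_val, h1]
  have h3 : ((Mag.mu x : (Mag α)ˣ) : Mag α) = ((Mag.mu y : (Mag α)ˣ) : Mag α) :=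
    Mag.pow_cancel (Mag.aug x) (Mag.aug y) hk h2
  have h4 : Mag.mu x = Mag.mu y := Units.ext h3
  by_contra hne
  have hz : x * y⁻¹ ≠ 1 := fun hc => hne (by
    have := congrArg (· * y) hc
    simpa [mul_assoc] using this)
  apply Mag.mu_ne_one hz
  rw [map_mul, map_inv, h4, mul_inv_cancel]
end

section
/- If N is a finite-index subgroup of a free group F of rank n, with index d, then N is a free group of rank d(n-1)+1. -/
open Quiver FreeGroup

lemma finite_and_card_eq_of_freeGroup_mulEquiv {α β : Type*} [Finite α]
    (e : FreeGroup α ≃* FreeGroup β) : Finite β ∧ Nat.card β = Nat.card α := by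
  classical
  set M := Multiplicative (ZMod 2) with hM
  have E1 : (FreeGroup α →* M) ≃ (FreeGroup β →* M) :=
    { toFun := fun f => f.comp e.symm.toMonoidHom
      invFun := fun f => f.comp e.toMonoidHom
      left_inv := fun f => by ext x; simp
      right_inv := fun f => by ext x; simp }
  have E2 : (α → M) ≃ (β → M) := FreeGroup.lift.trans (E1.trans FreeGroup.lift.symm)
  have hfin2 : Finite (β → M) := Finite.of_equiv _ E2
  have hone : (Multiplicative.ofAdd (1 : ZMod 2)) ≠ (1 : M) := by decide
  have hβ : Finite β := by
    have hinj : Function.Injective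
        (fun b : β => fun c : β => if c = b then (Multiplicative.ofAdd (1 : ZMod 2) : M) else 1) := by
      intro b b' h
      have h2 := congrFun h b
      simp only [if_pos rfl] at h2
      by_contra hne
      rw [if_neg hne] at h2
      exact hone h2
    exact Finite.of_injective _ hinj
  refine ⟨hβ, ?_⟩
  have hMcard : Nat.card M = 2 := by
    simp [hM, Nat.card_eq_fintype_card]
  have h1 : Nat.card (β → M) = Nat.card (α → M) := Nat.card_congr E2.symm
  rw [Nat.card_fun, Nat.card_fun, hMcard] at h1
  exact Nat.pow_right_injective le_rfl h1


open Quiver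

universe u

section Arbo

variable {V : Type u} [Quiver.{u} V] (T : WideSubquiver (Symmetrify V))
  [ht : Arborescence (WideSubquiver.toType (Symmetrify V) T)]

local notation "TT" => WideSubquiver.toType (Symmetrify V) T

-- no arrow of T points to the root
lemma no_arrow_to_root {a : TT} (e : a ⟶ Quiver.root TT) : False := by
  have h : ((default : Path (Quiver.root TT) a).cons e) = (Path.nil : Path (Quiver.root TT) (Quiver.root TT)) :=
    Subsingleton.elim _ _
  simpa using congrArg Path.length h

-- at most one arrow of T into each vertex
lemma unique_arrow_to {a b c : TT} (e : a ⟶ c) (f : b ⟶ c) : a = b ∧ HEq e f := by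
  have h : ((default : Path (Quiver.root TT) a).cons e) = ((default : Path (Quiver.root TT) b).cons f) :=
    Subsingleton.elim _ _
  exact ⟨Path.obj_eq_of_cons_eq_cons h, Path.hom_heq_of_cons_eq_cons h⟩

-- T cannot contain both directions of the same underlying edge
lemma not_both_dirs {a b : V} (g : a ⟶ b) (h1 : Sum.inl g ∈ T a b) (h2 : Sum.inr g ∈ T b a) :
    False := by
  let e : (show TT from a) ⟶ (show TT from b) := ⟨Sum.inl g, h1⟩
  let f : (show TT from b) ⟶ (show TT from a) := ⟨Sum.inr g, h2⟩
  have hb : (default : Path (Quiver.root TT) (show TT from b)) =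
      (default : Path (Quiver.root TT) (show TT from a)).cons e := Subsingleton.elim _ _
  have ha : (default : Path (Quiver.root TT) (show TT from a)) =
      (default : Path (Quiver.root TT) (show TT from b)).cons f := Subsingleton.elim _ _
  have := congrArg Path.length (ha.trans (by rw [hb]))
  rw [Path.length_cons, Path.length_cons] at this
  omega

open scoped Classical in
/-- send a tree edge to the vertex it "discovers" -/
noncomputable def treeTarget (e : Total V) : TT :=
  if Sum.inl e.hom ∈ T e.left e.right then (show TT from e.right) else (show TT from e.left)

open scoped Classical in
lemma treeTarget_bijOn :
    Set.BijOn (treeTarget T) {e : Total V | e.hom ∈ wideSubquiverSymmetrify T e.left e.right}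
      {b : TT | b ≠ Quiver.root TT} := by
  constructor
  · -- maps into
    rintro ⟨a, b, g⟩ hg
    unfold treeTarget
    split_ifs with h
    · intro hroot
      exact no_arrow_to_root T (show (show TT from a) ⟶ Quiver.root TT from hroot ▸ (⟨Sum.inl g, h⟩ : (show TT from a) ⟶ (show TT from b)))
    · rcases hg with hg | hg
      · exact absurd hg h
      · intro hroot
        exact no_arrow_to_root T (show (show TT from b) ⟶ Quiver.root TT from hroot ▸ (⟨Sum.inr g, hg⟩ : (show TT from b) ⟶ (show TT from a)))
  constructor
  · -- injective
    rintro ⟨a, b, g⟩ hg ⟨a', b', g'⟩ hg' heq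
    unfold treeTarget at heq
    split_ifs at heq with h h' h'
    · -- both inl
      subst heq
      obtain ⟨rfl, hh⟩ := unique_arrow_to T (⟨Sum.inl g, h⟩ : (show TT from a) ⟶ (show TT from b))
        (⟨Sum.inl g', h'⟩ : (show TT from a') ⟶ (show TT from b))
      obtain rfl : g = g' := by
        have := Subtype.mk_eq_mk.mp (eq_of_heq hh)
        exact Sum.inl_injective this
      rfl
    · -- g inl into b, g' inr into a' ; b = a'
      rcases hg' with hg' | hg'
      · exact absurd hg' h'
      subst heq
      obtain ⟨rfl, hh⟩ := unique_arrow_to T (⟨Sum.inl g, h⟩ : (show TT from a) ⟶ (show TT from b))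
        (⟨Sum.inr g', hg'⟩ : (show TT from b') ⟶ (show TT from b))
      exact absurd (Subtype.mk_eq_mk.mp (eq_of_heq hh)) (by simp)
    · rcases hg with hg | hg
      · exact absurd hg h
      subst heq
      obtain ⟨rfl, hh⟩ := unique_arrow_to T (⟨Sum.inr g, hg⟩ : (show TT from b) ⟶ (show TT from a))
        (⟨Sum.inl g', h'⟩ : (show TT from a') ⟶ (show TT from a))
      exact absurd (Subtype.mk_eq_mk.mp (eq_of_heq hh)) (by simp)
    · rcases hg with hg | hg
      · exact absurd hg h
      rcases hg' with hg' | hg'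
      · exact absurd hg' h'
      subst heq
      obtain ⟨rfl, hh⟩ := unique_arrow_to T (⟨Sum.inr g, hg⟩ : (show TT from b) ⟶ (show TT from a))
        (⟨Sum.inr g', hg'⟩ : (show TT from b') ⟶ (show TT from a))
      obtain rfl : g = g' := Sum.inr_injective (Subtype.mk_eq_mk.mp (eq_of_heq hh))
      rfl
  · -- surjective
    rintro b hb
    rcases hp : (default : Path (Quiver.root TT) b) with _ | ⟨q, e⟩
    · exact absurd rfl hb
    · rename_i c
      obtain ⟨(g | g), hg⟩ := e
      · refine ⟨⟨show V from c, show V from b, g⟩, Or.inl hg, ?_⟩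
        simp [treeTarget, hg]
      · refine ⟨⟨show V from b, show V from c, g⟩, Or.inr hg, ?_⟩
        have hno : ¬ (Sum.inl g ∈ T (show V from b) (show V from c)) :=
          fun h => not_both_dirs T g h hg
        simp [treeTarget, hno]

end Arbo


open CategoryTheory CategoryTheory.ActionCategory Quiver IsFreeGroupoid

lemma total_equiv (F : Type) [Group F] [IsFreeGroup F] (A : Type) [MulAction F A] :
    Nonempty (Total (IsFreeGroupoid.Generators (ActionCategory F A)) ≃ (IsFreeGroup.Generators F) × A) := by
  refine ⟨{
    toFun := fun t => (t.hom.val, (show ActionCategory F A from t.left).back)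
    invFun := fun p => ⟨(objEquiv F A p.2 : ActionCategory F A),
      (objEquiv F A (IsFreeGroup.of p.1 • p.2) : ActionCategory F A), ⟨p.1, rfl⟩⟩
    left_inv := ?_
    right_inv := ?_ }⟩
  · rintro ⟨a, b, f⟩
    obtain ⟨⟨⟩, x⟩ := a
    obtain ⟨⟨⟩, y⟩ := b
    obtain ⟨e, h⟩ := f
    cases h
    rfl
  · rintro ⟨e, x⟩
    rfl


noncomputable section

open scoped Classical

open CategoryTheory CategoryTheory.ActionCategory CategoryTheory.SingleObj Quiver
  IsFreeGroupoid IsFreeGroupoid.SpanningTree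


/-- The explicit free-group basis for the vertex group at the root, from the proof of
`IsFreeGroupoid.SpanningTree.endIsFree` in Mathlib. -/
noncomputable def endBasis {G : Type u} [Groupoid.{u} G] [IsFreeGroupoid G]
    (T : WideSubquiver (Symmetrify <| IsFreeGroupoid.Generators G)) [Arborescence T] :
    FreeGroupBasis ((wideSubquiverEquivSetTotal <| wideSubquiverSymmetrify T)ᶜ : Set _)
      (CategoryTheory.End (show G from Quiver.root T)) :=
  FreeGroupBasis.ofUniqueLift ((wideSubquiverEquivSetTotal <| wideSubquiverSymmetrify T)ᶜ : Set _)
    (fun e => loopOfHom T (of e.val.hom))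
    (by
      intro X _ f
      let f' : Labelling (Generators G) X := fun a b e =>
        if h : e ∈ wideSubquiverSymmetrify T a b then 1 else f ⟨⟨a, b, e⟩, h⟩
      rcases unique_lift f' with ⟨F', hF', uF'⟩
      refine ⟨F'.mapEnd _, ?_, ?_⟩
      · suffices ∀ {x y} (q : x ⟶ y), F'.map (loopOfHom T q) = (F'.map q : X) by
          rintro ⟨⟨a, b, e⟩, h⟩
          erw [Functor.mapEnd_apply, this, hF']
          exact dif_neg h
        intros x y q
        suffices ∀ {a} (p : Path (root T) a), F'.map (homOfPath T p) = 1 by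
          simp only [this, treeHom, comp_as_mul, inv_as_inv, loopOfHom, inv_one, mul_one,
            one_mul, Functor.map_inv, Functor.map_comp]
          erw [this, this, inv_one, one_mul, mul_one]
        intro a p
        induction' p with b c p e ih
        · rw [homOfPath]; exact F'.map_id _
        show F'.map (homOfPath T p ≫ _) = 1
        erw [F'.map_comp, comp_as_mul, ih, mul_one]
        rcases e with ⟨e | e, eT⟩
        · erw [hF']
          exact dif_pos (Or.inl eT)
        · erw [F'.map_inv, inv_as_inv, inv_eq_one, hF']
          exact dif_pos (Or.inr eT)
      · intro E hE
        have htr : treeHom T (show G from Quiver.root T) = 𝟙 (show G from Quiver.root T) := treeHom_root T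
        ext x
        have h1 : (functorOfMonoidHom T E).map x = F'.map x := by
          congr
          apply uF'
          intro a b e
          change E (loopOfHom T _) = dite _ _ _
          split_ifs with h
          · rw [loopOfHom_eq_id T e h, ← End.one_def]; exact E.map_one
          · exact hE ⟨⟨a, b, e⟩, h⟩
        have h2 : (functorOfMonoidHom T E).map x =
            E (treeHom T _ ≫ x ≫ @inv _ _ _ _ (treeHom T _) (IsIso.of_groupoid _)) := rfl
        rw [h2, htr] at h1
        erw [Category.id_comp, IsIso.inv_id, Category.comp_id] at h1
        exact h1)

private lemma card_compl_singleton {X : Type*} [Finite X] (x : X) :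
    Nat.card {b : X // b ≠ x} = Nat.card X - 1 := by
  classical
  cases nonempty_fintype X
  simp [Nat.card_eq_fintype_card, Fintype.card_subtype_compl, Fintype.card_subtype_eq]

/-- Nielsen–Schreier index formula: a subgroup of index `d` in a free group of rank `n`
is free of rank `d(n-1) + 1`. -/
theorem nielsen_schreier_index_formula (n d : ℕ) (hd : 0 < d)
    (G : Type) [Group G] (hG : Nonempty (G ≃* FreeGroup (Fin n)))
    (N : Subgroup G) (hN : N.index = d) :
    ∃ m : ℕ, Nonempty (N ≃* FreeGroup (Fin m)) ∧ (m : ℤ) = d * ((n : ℤ) - 1) + 1 := by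
  obtain ⟨e⟩ := hG
  let F := FreeGroup (Fin n)
  let H : Subgroup F := N.map (e : G →* F)
  have eNH : N ≃* H := e.subgroupMap N
  have hHidx : H.index = d := by
    have h1 : (N.map (e : G →* F)).index = N.index * ((e : G →* F)).range.index :=
      Subgroup.index_map_of_injective N e.injective
    rw [MonoidHom.range_eq_top_of_surjective _ e.surjective, Subgroup.index_top, mul_one] at h1
    rw [show H = N.map (e : G →* F) from rfl, h1, hN]
  clear hN
  let A := F ⧸ H
  have hA : Nat.card A = d := hHidx
  haveI hAfin : Finite A := Nat.finite_of_card_ne_zero (by rw [hA]; omega)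
  obtain ⟨hGenFin, hGenCard⟩ :=
    finite_and_card_eq_of_freeGroup_mulEquiv (IsFreeGroup.toFreeGroup F)
  haveI := hGenFin
  have hGenCard' : Nat.card (IsFreeGroup.Generators F) = n := by
    rw [hGenCard, Nat.card_eq_fintype_card, Fintype.card_fin]
  let 𝒜 := ActionCategory F A
  let r : 𝒜 := objEquiv F A ((1 : F) : A)
  letI : RootedConnected (show Symmetrify (IsFreeGroupoid.Generators 𝒜) from r) :=
    ⟨fun b => IsFreeGroupoid.path_nonempty_of_hom
      (@CategoryTheory.nonempty_hom_of_preconnected_groupoid _ _ (inferInstance : IsConnected 𝒜).toIsPreconnected r b)⟩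
  let T := geodesicSubtree (show Symmetrify (IsFreeGroupoid.Generators 𝒜) from r)
  letI hT : Arborescence (WideSubquiver.toType (Symmetrify (IsFreeGroupoid.Generators 𝒜)) T) :=
    geodesicArborescence _
  let basis := endBasis T
  have hroot : (show 𝒜 from Quiver.root
      (WideSubquiver.toType (Symmetrify (IsFreeGroupoid.Generators 𝒜)) T)) = r := rfl
  have eqn : N ≃* FreeGroup
      ((wideSubquiverEquivSetTotal <| wideSubquiverSymmetrify T)ᶜ :
        Set (Total (IsFreeGroupoid.Generators 𝒜))) :=
    (eNH.trans (endMulEquivSubgroup H).symm).trans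
      (show CategoryTheory.End r ≃* _ from hroot ▸ basis.repr)
  -- counting
  obtain ⟨etot⟩ := total_equiv F A
  haveI hTotFin : Finite (Total (IsFreeGroupoid.Generators 𝒜)) := Finite.of_equiv _ etot.symm
  have htot : Nat.card (Total (IsFreeGroupoid.Generators 𝒜)) = n * d := by
    rw [Nat.card_congr etot, Nat.card_prod, hGenCard', hA]
  haveI h𝒜fin : Finite 𝒜 := Finite.of_equiv _ (objEquiv F A)
  haveI hTTfin : Finite (WideSubquiver.toType (Symmetrify (IsFreeGroupoid.Generators 𝒜)) T) :=
    h𝒜fin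
  have hTTcard : Nat.card
      (WideSubquiver.toType (Symmetrify (IsFreeGroupoid.Generators 𝒜)) T) = d := by
    rw [show Nat.card (WideSubquiver.toType (Symmetrify (IsFreeGroupoid.Generators 𝒜)) T)
      = Nat.card 𝒜 from rfl, Nat.card_congr (objEquiv F A).symm, hA]
  set W : Set (Total (IsFreeGroupoid.Generators 𝒜)) :=
    wideSubquiverEquivSetTotal (wideSubquiverSymmetrify T) with hWdef
  have hW : Nat.card ↥W = d - 1 := by
    have hbij := treeTarget_bijOn T
    have := Nat.card_congr (Set.BijOn.equiv _ hbij)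
    rw [show ({e : Total (IsFreeGroupoid.Generators 𝒜) |
        e.hom ∈ wideSubquiverSymmetrify T e.left e.right} : Set _) = W from rfl] at this
    rw [this]
    have := card_compl_singleton
      (Quiver.root (WideSubquiver.toType (Symmetrify (IsFreeGroupoid.Generators 𝒜)) T))
    rw [hTTcard] at this
    exact this
  have hpart : Nat.card ↥W + Nat.card ↥(Wᶜ) = n * d := by
    rw [Nat.card_coe_set_eq, Nat.card_coe_set_eq, ← htot]
    exact Set.ncard_add_ncard_compl W
  refine ⟨Nat.card ↥(Wᶜ), ⟨eqn.trans (FreeGroup.freeGroupCongr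
    (Finite.equivFinOfCardEq rfl))⟩, ?_⟩
  rw [hW] at hpart
  have hd1 : ((d - 1 : ℕ) : ℤ) = (d : ℤ) - 1 := by omega
  have : ((d - 1 : ℕ) : ℤ) + (Nat.card ↥(Wᶜ) : ℤ) = (n : ℤ) * d := by exact_mod_cast hpart
  rw [hd1] at this
  linarith [this, mul_comm (d : ℤ) ((n : ℤ) - 1)]
end
end

section
/- The limit as x → ∞ of (1/x)·∑_{k=2}^{x} f(k) exists and equals C = ∑_p (p−1)/Q(p), where the sum ranges over all primes p, f(k) is the smallest prime not dividing k, and Q(p) is the product of all primes strictly less than p (Q(2)=1). -/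
/-- `leastNonDivPrime k` is the smallest prime which does not divide `k`. -/
noncomputable def leastNonDivPrime (k : ℕ) : ℕ := sInf {p : ℕ | p.Prime ∧ ¬ p ∣ k}

/-- `primorialBelow p` is the product of all primes strictly less than `p`
(so `primorialBelow 2 = 1`). -/
def primorialBelow (p : ℕ) : ℕ := ∏ q ∈ (Finset.range p).filter Nat.Prime, q

open Finset

lemma primorialBelow_pos (p : ℕ) : 0 < primorialBelow p :=
  Finset.prod_pos fun q hq => (Finset.mem_filter.1 hq).2.pos

lemma prime_dvd_primorialBelow {q p : ℕ} (hq : q.Prime) (h : q < p) :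
    q ∣ primorialBelow p :=
  Finset.dvd_prod_of_mem _ (by simp [Finset.mem_filter, Finset.mem_range, h, hq])

lemma not_dvd_primorialBelow {p : ℕ} (hp : p.Prime) : ¬ p ∣ primorialBelow p := by
  intro h
  obtain ⟨q, hq, hpq⟩ := (hp.prime.dvd_finset_prod_iff _).1 h
  simp only [Finset.mem_filter, Finset.mem_range] at hq
  have := (Nat.prime_dvd_prime_iff_eq hp hq.2).1 hpq
  omega

lemma primorialBelow_dvd {p k : ℕ} (h : ∀ q, q.Prime → q < p → q ∣ k) :
    primorialBelow p ∣ k := by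
  refine Finset.prod_primes_dvd _ (fun q hq => (Finset.mem_filter.1 hq).2.prime) ?_
  intro q hq
  simp only [Finset.mem_filter, Finset.mem_range] at hq
  exact h q hq.2 hq.1

lemma primorialBelow_succ_max {p : ℕ} (hp : p.Prime) (h13 : 13 ≤ p) :
    ∃ q : ℕ, q.Prime ∧ q < p ∧ 11 ≤ q ∧ p ≤ 2 * q ∧
      primorialBelow p = q * primorialBelow q := by
  classical
  set s := (Finset.range p).filter Nat.Prime with hs
  have hne : s.Nonempty := ⟨2, by simp [hs, Finset.mem_filter, Nat.prime_two]; omega⟩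
  set q := s.max' hne with hq
  have hqmem : q ∈ s := s.max'_mem hne
  simp only [hs, Finset.mem_filter, Finset.mem_range] at hqmem
  have hmax : ∀ r, r.Prime → r < p → r ≤ q := by
    intro r hr hrp
    exact s.le_max' r (by simp [hs, Finset.mem_filter, Finset.mem_range, hr, hrp])
  have h11 : 11 ≤ q := hmax 11 (by norm_num) (by omega)
  obtain ⟨r, hr, hqr, hr2⟩ := Nat.exists_prime_lt_and_le_two_mul q (by omega)
  have hpr : p ≤ r := by
    by_contra hc
    exact absurd (hmax r hr (by omega)) (by omega)
  have hset : s = insert q ((Finset.range q).filter Nat.Prime) := by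
    ext r
    simp only [hs, Finset.mem_insert, Finset.mem_filter, Finset.mem_range]
    constructor
    · rintro ⟨hrp, hrpr⟩
      rcases eq_or_lt_of_le (hmax r hrpr hrp) with h | h
      · exact Or.inl h
      · exact Or.inr ⟨h, hrpr⟩
    · rintro (rfl | ⟨h1, h2⟩)
      · exact ⟨hqmem.1, hqmem.2⟩
      · exact ⟨by omega, h2⟩
  refine ⟨q, hqmem.2, hqmem.1, h11, by omega, ?_⟩
  rw [primorialBelow, ← hs, hset, Finset.prod_insert (by simp)]
  rfl

lemma cube_le_primorialBelow {p : ℕ} (hp : p.Prime) : p ^ 3 ≤ 21 * primorialBelow p := by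
  induction p using Nat.strong_induction_on with
  | _ p ih =>
    by_cases h13 : p < 13
    · interval_cases p <;> first | (exact absurd hp (by decide)) | decide
    · obtain ⟨q, hq, hqp, h11, h2q, heq⟩ := primorialBelow_succ_max hp (by omega)
      have hIH := ih q hqp hq
      have h1 : p ^ 3 ≤ 8 * q ^ 3 := by
        calc p ^ 3 ≤ (2 * q) ^ 3 := Nat.pow_le_pow_left h2q 3
          _ = 8 * q ^ 3 := by ring
      have h2 : 8 * q ^ 3 ≤ q * (21 * primorialBelow q) := by nlinarith
      rw [heq]
      nlinarith

lemma leastNonDivPrime_mem {k : ℕ} (hk : 1 ≤ k) :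
    leastNonDivPrime k ∈ {p : ℕ | p.Prime ∧ ¬ p ∣ k} := by
  apply Nat.sInf_mem
  obtain ⟨r, hrk, hr⟩ := Nat.exists_infinite_primes (k + 1)
  exact ⟨r, hr, fun hd => by have := Nat.le_of_dvd (by omega) hd; omega⟩

lemma leastNonDivPrime_eq_iff {k p : ℕ} (hk : 1 ≤ k) (hp : p.Prime) :
    leastNonDivPrime k = p ↔ primorialBelow p ∣ k ∧ ¬ p ∣ k := by
  constructor
  · rintro rfl
    obtain ⟨hprime, hnd⟩ := leastNonDivPrime_mem hk
    refine ⟨primorialBelow_dvd fun q hq hlt => ?_, hnd⟩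
    by_contra hqnd
    have hle : leastNonDivPrime k ≤ q :=
      Nat.sInf_le (show q ∈ {p : ℕ | p.Prime ∧ ¬ p ∣ k} from ⟨hq, hqnd⟩)
    omega
  · rintro ⟨hQ, hnd⟩
    obtain ⟨hprime, hnd'⟩ := leastNonDivPrime_mem hk
    have h1 : leastNonDivPrime k ≤ p := Nat.sInf_le (show p ∈ {p : ℕ | p.Prime ∧ ¬ p ∣ k} from ⟨hp, hnd⟩)
    have h2 : ¬ leastNonDivPrime k < p := fun hlt =>
      hnd' ((prime_dvd_primorialBelow hprime hlt).trans hQ)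
    omega

lemma card_fiber (p x : ℕ) (hp : p.Prime) :
    ((Finset.Ioc 0 x).filter (fun k => leastNonDivPrime k = p)).card
      = x / primorialBelow p - x / (p * primorialBelow p) := by
  classical
  have hcop : Nat.Coprime p (primorialBelow p) :=
    (Nat.Prime.coprime_iff_not_dvd hp).2 (not_dvd_primorialBelow hp)
  have hset : (Finset.Ioc 0 x).filter (fun k => leastNonDivPrime k = p)
      = ((Finset.Ioc 0 x).filter (primorialBelow p ∣ ·))
        \ ((Finset.Ioc 0 x).filter (p * primorialBelow p ∣ ·)) := by
    ext k
    simp only [Finset.mem_filter, Finset.mem_sdiff, Finset.mem_Ioc, not_and]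
    constructor
    · rintro ⟨⟨h0, hx⟩, hk⟩
      rw [leastNonDivPrime_eq_iff h0 hp] at hk
      refine ⟨⟨⟨h0, hx⟩, hk.1⟩, fun _ hd => hk.2 (dvd_trans (dvd_mul_right _ _) hd)⟩
    · rintro ⟨⟨⟨h0, hx⟩, hQ⟩, hnd⟩
      refine ⟨⟨h0, hx⟩, (leastNonDivPrime_eq_iff h0 hp).2 ⟨hQ, fun hpk => ?_⟩⟩
      exact hnd ⟨h0, hx⟩ (Nat.Coprime.mul_dvd_of_dvd_of_dvd hcop hpk hQ)
  rw [hset, Finset.card_sdiff_of_subset]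
  · rw [Nat.Ioc_filter_dvd_card_eq_div, Nat.Ioc_filter_dvd_card_eq_div]
  · intro k hk
    simp only [Finset.mem_filter] at hk ⊢
    exact ⟨hk.1, (dvd_mul_left _ _).trans hk.2⟩

lemma leastNonDivPrime_le {x k : ℕ} (h0 : 0 < k) (hx : k ≤ x) :
    leastNonDivPrime k < 21 * x + 1 := by
  obtain ⟨hp, hnd⟩ := leastNonDivPrime_mem h0
  set p := leastNonDivPrime k with hpk
  have hQ : primorialBelow p ∣ k := ((leastNonDivPrime_eq_iff h0 hp).1 rfl).1
  have hQle : primorialBelow p ≤ k := Nat.le_of_dvd h0 hQ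
  have h3 : p ^ 3 ≤ 21 * primorialBelow p := cube_le_primorialBelow hp
  have hp1 : 1 ≤ p := hp.one_lt.le
  have hpp : p ≤ p ^ 3 := Nat.le_self_pow (by norm_num) p
  omega

lemma sum_Ioc_eq (x : ℕ) :
    ∑ k ∈ Finset.Ioc 0 x, (leastNonDivPrime k : ℝ)
      = ∑' p : Nat.Primes,
          (((p : ℕ) : ℝ) *
            ((x / primorialBelow (p : ℕ) - x / ((p : ℕ) * primorialBelow (p : ℕ)) : ℕ) : ℝ)) := by
  classical
  have hvanish : ∀ p : Nat.Primes,
      p ∉ (Finset.range (21 * x + 1)).subtype Nat.Prime →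
      (((p : ℕ) : ℝ) *
        ((x / primorialBelow (p : ℕ) - x / ((p : ℕ) * primorialBelow (p : ℕ)) : ℕ) : ℝ)) = 0 := by
    intro p hp
    have hp' : 21 * x + 1 ≤ (p : ℕ) := by
      by_contra h
      exact hp (Finset.mem_subtype.2 (Finset.mem_range.2 (by omega)))
    have hp3 : (p : ℕ) ^ 3 ≤ 21 * primorialBelow (p : ℕ) := cube_le_primorialBelow p.2
    have hp1 : 1 ≤ (p : ℕ) := p.2.one_lt.le
    have hpp : (p : ℕ) ≤ (p : ℕ) ^ 3 := Nat.le_self_pow (by norm_num) _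
    have hQ : x < primorialBelow (p : ℕ) := by omega
    have h1 : x / primorialBelow (p : ℕ) = 0 := Nat.div_eq_of_lt hQ
    have h2 : x / ((p : ℕ) * primorialBelow (p : ℕ)) = 0 :=
      Nat.div_eq_of_lt (lt_of_lt_of_le hQ (Nat.le_mul_of_pos_left _ (by omega)))
    rw [h1, h2]
    norm_num
  rw [tsum_eq_sum hvanish]
  have hsub : ∑ p ∈ (Finset.range (21 * x + 1)).subtype Nat.Prime,
      (((p : ℕ) : ℝ) *
        ((x / primorialBelow (p : ℕ) - x / ((p : ℕ) * primorialBelow (p : ℕ)) : ℕ) : ℝ))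
      = ∑ p ∈ (Finset.range (21 * x + 1)).filter Nat.Prime,
        ((p : ℝ) * ((x / primorialBelow p - x / (p * primorialBelow p) : ℕ) : ℝ)) :=
    Finset.sum_subtype_eq_sum_filter
      (fun n : ℕ => (n : ℝ) * ((x / primorialBelow n - x / (n * primorialBelow n) : ℕ) : ℝ))
  refine Eq.trans ?_ hsub.symm
  rw [← Finset.sum_fiberwise_of_maps_to'
      (g := leastNonDivPrime) (t := (Finset.range (21 * x + 1)).filter Nat.Prime)
      (fun k hk => by
        simp only [Finset.mem_Ioc] at hk
        simp only [Finset.mem_filter, Finset.mem_range]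
        exact ⟨leastNonDivPrime_le hk.1 hk.2, (leastNonDivPrime_mem hk.1).1⟩)
      (fun p => (p : ℝ))]
  refine Finset.sum_congr rfl fun p hp => ?_
  simp only [Finset.mem_filter, Finset.mem_range] at hp
  rw [Finset.sum_const, ← card_fiber p x hp.2]
  simp [mul_comm]

open Filter Topology in
lemma tendsto_nat_div_div (d : ℕ) (hd : 0 < d) :
    Filter.Tendsto (fun x : ℕ => ((x / d : ℕ) : ℝ) / (x : ℝ)) Filter.atTop
      (nhds (1 / (d : ℝ))) := by
  have hmod : Filter.Tendsto (fun x : ℕ => ((x % d : ℕ) : ℝ) / (x : ℝ)) Filter.atTop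
      (nhds 0) := by
    apply squeeze_zero (fun n => by positivity) (fun n => ?_)
      (tendsto_const_div_atTop_nhds_zero_nat (d : ℝ))
    rcases Nat.eq_zero_or_pos n with rfl | hn
    · simp
    · have hn' : (0 : ℝ) < (n : ℝ) := by exact_mod_cast hn
      exact (div_le_div_iff_of_pos_right hn').2 (by exact_mod_cast (Nat.mod_lt _ hd).le)
  have h1 : Filter.Tendsto
      (fun x : ℕ => ((1 : ℝ) - ((x % d : ℕ) : ℝ) / (x : ℝ)) / (d : ℝ)) Filter.atTop
      (nhds (((1 : ℝ) - 0) / (d : ℝ))) := (tendsto_const_nhds.sub hmod).div_const _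
  rw [sub_zero] at h1
  apply h1.congr'
  filter_upwards [Filter.eventually_ge_atTop 1] with x hx
  have hx0 : (x : ℝ) ≠ 0 := by positivity
  have hd0 : (d : ℝ) ≠ 0 := by positivity
  have hmoddiv : (d : ℝ) * ((x / d : ℕ) : ℝ) + ((x % d : ℕ) : ℝ) = (x : ℝ) := by
    exact_mod_cast congrArg (Nat.cast : ℕ → ℝ) (Nat.div_add_mod x d)
  field_simp
  nlinarith [hmoddiv]

lemma leastNonDivPrime_one : leastNonDivPrime 1 = 2 :=
  (leastNonDivPrime_eq_iff le_rfl Nat.prime_two).2 (by decide)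

/-- The expected value of `f(k)`, the smallest prime not dividing `k`, exists and equals
`C = ∑_p (p−1)/Q(p)`. -/
theorem expected_value_leastNonDivPrime :
    Filter.Tendsto
      (fun x : ℕ => (∑ k ∈ Finset.Icc 2 x, (leastNonDivPrime k : ℝ)) / (x : ℝ))
      Filter.atTop
      (nhds (∑' p : Nat.Primes, (((p : ℕ) : ℝ) - 1) / (primorialBelow (p : ℕ) : ℝ))) := by
  classical
  set F : ℕ → Nat.Primes → ℝ := fun x p =>
    (((p : ℕ) : ℝ) *
      ((x / primorialBelow (p : ℕ) - x / ((p : ℕ) * primorialBelow (p : ℕ)) : ℕ) : ℝ)) / (x : ℝ)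
    with hF
  have hQpos : ∀ p : Nat.Primes, 0 < primorialBelow (p : ℕ) := fun p => primorialBelow_pos _
  have hppos : ∀ p : Nat.Primes, 0 < (p : ℕ) := fun p => p.2.pos
  -- summability of the bound
  have hbound_sum : Summable (fun p : Nat.Primes => 21 / ((p : ℕ) : ℝ) ^ 2) := by
    have h1 : Summable (fun n : ℕ => 21 / (n : ℝ) ^ 2) := by
      simpa [div_eq_mul_inv] using (Real.summable_one_div_nat_pow.2 one_lt_two).mul_left (21 : ℝ)
    exact h1.subtype {p : ℕ | p.Prime}
  -- pointwise limits
  have hab : ∀ p : Nat.Primes, Filter.Tendsto (fun x => F x p) Filter.atTop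
      (nhds ((((p : ℕ) : ℝ) - 1) / (primorialBelow (p : ℕ) : ℝ))) := by
    intro p
    set Q := primorialBelow (p : ℕ) with hQ
    have hQ0 : 0 < Q := hQpos p
    have hpQ0 : 0 < (p : ℕ) * Q := Nat.mul_pos (hppos p) hQ0
    have h := ((tendsto_nat_div_div Q hQ0).const_mul ((p : ℕ) : ℝ)).sub
      ((tendsto_nat_div_div ((p : ℕ) * Q) hpQ0).const_mul ((p : ℕ) : ℝ))
    have hval : ((p : ℕ) : ℝ) * (1 / (Q : ℝ)) - ((p : ℕ) : ℝ) * (1 / (((p : ℕ) * Q : ℕ) : ℝ))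
        = (((p : ℕ) : ℝ) - 1) / (Q : ℝ) := by
      have hp0 : ((p : ℕ) : ℝ) ≠ 0 := Nat.cast_ne_zero.2 (hppos p).ne'
      have hQ0' : ((Q : ℕ) : ℝ) ≠ 0 := by positivity
      push_cast
      field_simp
    rw [hval] at h
    apply h.congr
    intro x
    have hle : x / ((p : ℕ) * Q) ≤ x / Q :=
      Nat.div_le_div_left (Nat.le_mul_of_pos_left _ (hppos p)) hQ0
    simp only [hF]
    rw [Nat.cast_sub hle]
    ring
  -- the uniform bound
  have h_bound : ∀ x : ℕ, ∀ p : Nat.Primes, ‖F x p‖ ≤ 21 / ((p : ℕ) : ℝ) ^ 2 := by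
    intro x p
    set Q := primorialBelow (p : ℕ) with hQ
    have hQ0 : 0 < Q := hQpos p
    set c : ℕ := x / Q - x / ((p : ℕ) * Q) with hc
    have hcx : c * Q ≤ x :=
      le_trans (Nat.mul_le_mul_right _ (Nat.sub_le _ _)) (Nat.div_mul_le_self x Q)
    have hFnn : 0 ≤ F x p := by
      simp only [hF]
      positivity
    rw [Real.norm_of_nonneg hFnn]
    have h2 : ((c : ℝ)) / (x : ℝ) ≤ 1 / (Q : ℝ) := by
      rcases Nat.eq_zero_or_pos x with rfl | hx
      · simp only [Nat.cast_zero, div_zero]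
        positivity
      · rw [div_le_div_iff₀ (by exact_mod_cast hx) (by exact_mod_cast hQ0)]
        have hcx' : (c : ℝ) * (Q : ℝ) ≤ (x : ℝ) := by exact_mod_cast hcx
        linarith
    have h3 : F x p ≤ ((p : ℕ) : ℝ) * (1 / (Q : ℝ)) := by
      simp only [hF, mul_div_assoc]
      exact mul_le_mul_of_nonneg_left h2 (by positivity)
    refine h3.trans ?_
    have hcube : ((p : ℕ) : ℝ) ^ 3 ≤ 21 * (Q : ℝ) := by exact_mod_cast cube_le_primorialBelow p.2
    rw [mul_one_div, div_le_div_iff₀ (by exact_mod_cast hQ0) (pow_pos (by exact_mod_cast hppos p) 2)]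
    nlinarith [hcube]
  -- dominated convergence
  have htsum : Filter.Tendsto (fun x => ∑' p : Nat.Primes, F x p) Filter.atTop
      (nhds (∑' p : Nat.Primes, (((p : ℕ) : ℝ) - 1) / (primorialBelow (p : ℕ) : ℝ))) :=
    tendsto_tsum_of_dominated_convergence hbound_sum hab
      (Filter.Eventually.of_forall h_bound)
  have hfinal := htsum.sub (tendsto_const_div_atTop_nhds_zero_nat (2 : ℝ))
  rw [sub_zero] at hfinal
  apply hfinal.congr'
  filter_upwards [Filter.eventually_ge_atTop 1] with x hx
  have hins : Finset.Ioc 0 x = insert 1 (Finset.Icc 2 x) := by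
    ext k
    simp only [Finset.mem_Ioc, Finset.mem_insert, Finset.mem_Icc]
    omega
  have hsum2 : ∑ k ∈ Finset.Ioc 0 x, (leastNonDivPrime k : ℝ)
      = 2 + ∑ k ∈ Finset.Icc 2 x, (leastNonDivPrime k : ℝ) := by
    rw [hins, Finset.sum_insert (by simp), leastNonDivPrime_one]
    norm_num
  have hdiv : ∑' p : Nat.Primes, F x p
      = (∑ k ∈ Finset.Ioc 0 x, (leastNonDivPrime k : ℝ)) / (x : ℝ) := by
    rw [sum_Ioc_eq x, ← tsum_div_const]
  rw [hdiv, hsum2]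
  have hx0 : (x : ℝ) ≠ 0 := by
    have : (0:ℝ) < x := by exact_mod_cast hx
    positivity
  field_simp
  ring
end

section
/- The semidirect product Z^{n−1} ⋊_ψ Z, where ψ is the automorphism of Z^{n−1} cyclically permuting a free basis, is torsion-free. -/
/-- The automorphism of `ℤ^m` cyclically permuting the standard basis. -/
def cycShift (m : ℕ) : (Fin m → ℤ) ≃+ (Fin m → ℤ) :=
  { Equiv.arrowCongr (finRotate m) (Equiv.refl ℤ) with
    map_add' := fun _ _ => rfl }

/-- A monoid is torsion-free if no element other than the identity has finite order
(the definition `Monoid.IsTorsionFree` of the older Mathlib, since removed). -/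
def Monoid.IsTorsionFree (G : Type*) [Monoid G] : Prop :=
  ∀ g : G, g ≠ 1 → ¬IsOfFinOrder g

/-- The semidirect product `ℤ^{n-1} ⋊_ψ ℤ`, where `ψ` cyclically permutes a free basis of
`ℤ^{n-1}`, is torsion-free. -/
theorem semidirect_cyclic_shift_torsionFree (n : ℕ) (hn : 2 ≤ n) :
    Monoid.IsTorsionFree
      (SemidirectProduct (Multiplicative (Fin (n - 1) → ℤ)) (Multiplicative ℤ)
        (zpowersHom _ (AddEquiv.toMultiplicative (cycShift (n - 1))))) := by
  intro g hg hfin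
  obtain ⟨k, hk, hgk⟩ := isOfFinOrder_iff_pow_eq_one.mp hfin
  have hr : (SemidirectProduct.rightHom g) ^ k = 1 := by
    rw [← map_pow, hgk, map_one]
  have hr0 : g.right = 1 := by
    have h1 : (k : ℤ) * Multiplicative.toAdd g.right = 0 := by
      have := congrArg Multiplicative.toAdd hr
      simpa [toAdd_pow, nsmul_eq_mul] using this
    have h2 : Multiplicative.toAdd g.right = 0 := by
      rcases mul_eq_zero.mp h1 with h | h
      · exact absurd h (by exact_mod_cast hk.ne')
      · exact h
    exact h2
  have hgeq : g = SemidirectProduct.inl g.left := by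
    ext <;> simp [hr0]
  rw [hgeq, ← map_pow] at hgk
  have hl : g.left ^ k = 1 :=
    SemidirectProduct.inl_injective (by simpa using hgk)
  have hl0 : g.left = 1 := by
    have h1 : k • Multiplicative.toAdd g.left = 0 := by
      have := congrArg Multiplicative.toAdd hl
      simpa [toAdd_pow] using this
    have := smul_eq_zero.mp h1
    rcases this with h | h
    · exact absurd h hk.ne'
    · exact h
  apply hg
  rw [hgeq, hl0, map_one]
end

section
/- Let G = (Z/r)^{n−1} ⋊_ψ Z/(r(n−1)), where the generator x of Z/(r(n−1)) acts on (Z/r)^{n−1} by cyclically permuting a basis α_1,…,α_{n−1}, and let N ≅ (Z/r)^n be the subgroup generated by α_1,…,α_{n−1} and α_0 := x^{n−1} (which is central). The quotient G/N is cyclic of order n−1, and the extension 1 → N → G → Z/(n−1) → 1 splits if and only if r is coprime to n−1. -/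
/-- Permutations of `Fin m` act on `(ZMod r)^m` by permuting coordinates. -/
def permMulAut (r m : ℕ) : Equiv.Perm (Fin m) →* MulAut (Multiplicative (Fin m → ZMod r)) :=
  MonoidHom.mk' (fun σ => AddEquiv.toMultiplicative
    { Equiv.arrowCongr σ (Equiv.refl (ZMod r)) with map_add' := fun _ _ => rfl })
    (fun σ τ => by ext v; rfl)

lemma finRotate_pow_self : ∀ m : ℕ, (finRotate m) ^ m = 1
  | 0 => rfl
  | 1 => by rw [pow_one, finRotate_one]; rfl
  | (m + 2) => by
      have h : orderOf (finRotate (m + 2)) = m + 2 := by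
        rw [← Equiv.Perm.lcm_cycleType, cycleType_finRotate,
          Multiset.lcm_singleton, normalize_eq]
      have h2 := pow_orderOf_eq_one (finRotate (m + 2))
      rwa [h] at h2

/-- The homomorphism `ℤ → Aut((ZMod r)^m)` sending `1` to the cyclic shift. -/
def zShiftHom (r m : ℕ) : ℤ →+ Additive (MulAut (Multiplicative (Fin m → ZMod r))) :=
  AddMonoidHom.mk' (fun k => Additive.ofMul (permMulAut r m (finRotate m) ^ k))
    (fun a b => by rw [zpow_add]; rfl)

lemma zShiftHom_eq_zero (r m : ℕ) : zShiftHom r m ((r * m : ℕ) : ℤ) = 0 := by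
  show Additive.ofMul ((permMulAut r m (finRotate m)) ^ ((r * m : ℕ) : ℤ)) = 0
  rw [zpow_natCast, pow_mul', ← map_pow, finRotate_pow_self, map_one, one_pow]
  rfl

/-- The action of `ZMod (r*m)` on `(ZMod r)^m` in which the generator acts by the cyclic
shift of coordinates. -/
def cycleActionHom (r m : ℕ) :
    Multiplicative (ZMod (r * m)) →* MulAut (Multiplicative (Fin m → ZMod r)) :=
  AddMonoidHom.toMultiplicativeLeft (ZMod.lift (r * m) ⟨zShiftHom r m, zShiftHom_eq_zero r m⟩)

/-- The group `G = (ZMod r)^m ⋊ ZMod (r*m)`, where the generator `x` of the cyclic factor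
acts by cyclically permuting the coordinates. -/
abbrev GrpG (r m : ℕ) : Type :=
  SemidirectProduct (Multiplicative (Fin m → ZMod r)) (Multiplicative (ZMod (r * m)))
    (cycleActionHom r m)

/-- The generator `x` of the cyclic factor of `G`. -/
def xGen (r m : ℕ) : GrpG r m :=
  SemidirectProduct.inr (Multiplicative.ofAdd (1 : ZMod (r * m)))

/-- The generator `α_i` of the abelian factor of `G`. -/
def alphaGen (r m : ℕ) (i : Fin m) : GrpG r m :=
  SemidirectProduct.inl (Multiplicative.ofAdd (Pi.single i (1 : ZMod r)))

open SemidirectProduct in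
/-- The projection `G → ZMod m`. -/
def piHom (r m : ℕ) : GrpG r m →* Multiplicative (ZMod m) :=
  (AddMonoidHom.toMultiplicative
    (ZMod.castHom (dvd_mul_left m r) (ZMod m)).toAddMonoidHom).comp rightHom

lemma piHom_inr (r m : ℕ) (k : ZMod (r * m)) :
    piHom r m (SemidirectProduct.inr (Multiplicative.ofAdd k)) =
      Multiplicative.ofAdd ((ZMod.castHom (dvd_mul_left m r) (ZMod m)) k) := rfl

lemma piHom_inl (r m : ℕ) (v : Multiplicative (Fin m → ZMod r)) :
    piHom r m (SemidirectProduct.inl v) = 1 := by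
  simp [piHom]

lemma xGen_pow (r m : ℕ) (t : ℕ) :
    xGen r m ^ t = SemidirectProduct.inr (Multiplicative.ofAdd (t : ZMod (r * m))) := by
  rw [xGen, ← map_pow]
  congr 1
  rw [← ofAdd_nsmul]
  congr 1
  simp

lemma alphaGen_pow (r m : ℕ) (i : Fin m) (c : ZMod r) [NeZero r] :
    alphaGen r m i ^ c.val = SemidirectProduct.inl (Multiplicative.ofAdd (Pi.single i c)) := by
  rw [alphaGen, ← map_pow, ← ofAdd_nsmul]
  congr 2
  rw [← Pi.single_smul]
  simp [ZMod.natCast_val, ZMod.cast_id]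

lemma inl_mem_closure (r m : ℕ) [NeZero r] (v : Fin m → ZMod r) :
    SemidirectProduct.inl (Multiplicative.ofAdd v) ∈
      Subgroup.closure ({xGen r m ^ m} ∪ Set.range (alphaGen r m)) := by
  have key : ∀ s : Finset (Fin m),
      SemidirectProduct.inl (Multiplicative.ofAdd (∑ i ∈ s, Pi.single i (v i))) ∈
        Subgroup.closure ({xGen r m ^ m} ∪ Set.range (alphaGen r m)) := by
    intro s
    induction s using Finset.induction with
    | empty => simp only [Finset.sum_empty, ofAdd_zero, map_one]; exact one_mem _
    | @insert a s hx ih =>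
        rw [Finset.sum_insert hx, ofAdd_add, map_mul]
        refine mul_mem ?_ ih
        have h : alphaGen r m a ∈ ({xGen r m ^ m} ∪ Set.range (alphaGen r m)) := Or.inr ⟨a, rfl⟩
        have h2 := Subgroup.pow_mem _ (Subgroup.subset_closure h) (v a).val
        rwa [alphaGen_pow] at h2
  have := key Finset.univ
  rwa [Finset.univ_sum_single v] at this

lemma piHom_xGen_pow (r m : ℕ) : piHom r m (xGen r m ^ m) = 1 := by
  rw [xGen_pow, piHom_inr, map_natCast, ZMod.natCast_self, ofAdd_zero]

lemma piHom_surjective (r m : ℕ) [NeZero m] : Function.Surjective (piHom r m) := by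
  intro a
  refine ⟨SemidirectProduct.inr (Multiplicative.ofAdd ((a.toAdd.val : ZMod (r * m)))), ?_⟩
  rw [piHom_inr, map_natCast]
  simp [ZMod.natCast_val, ZMod.cast_id]

lemma piHom_ker (r m : ℕ) [NeZero r] [NeZero m] :
    (piHom r m).ker = Subgroup.closure ({xGen r m ^ m} ∪ Set.range (alphaGen r m)) := by
  apply le_antisymm
  · intro g hg
    rw [MonoidHom.mem_ker] at hg
    have hgr : piHom r m (SemidirectProduct.inr g.right) = 1 := by
      have := hg
      rw [← SemidirectProduct.inl_left_mul_inr_right g, map_mul] at this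
      rw [show piHom r m (SemidirectProduct.inl g.left) = 1 from piHom_inl r m _,
        one_mul] at this
      exact this
    set k := g.right.toAdd with hk
    have hcast : (ZMod.castHom (dvd_mul_left m r) (ZMod m)) k = 0 := by
      have : Multiplicative.ofAdd ((ZMod.castHom (dvd_mul_left m r) (ZMod m)) k) = 1 := by
        rw [← piHom_inr]
        exact hgr
      exact ofAdd_eq_one.mp this
    have hdvd : m ∣ k.val := by
      have h2 : ((k.val : ℕ) : ZMod m) = 0 := by
        rw [ZMod.natCast_val]
        rw [ZMod.castHom_apply] at hcast
        exact hcast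
      exact (ZMod.natCast_eq_zero_iff _ _).mp h2
    obtain ⟨t, ht⟩ := hdvd
    have hinr : SemidirectProduct.inr (φ := cycleActionHom r m) g.right = (xGen r m ^ m) ^ t := by
      rw [← pow_mul, xGen_pow]
      congr 1
      rw [show g.right = Multiplicative.ofAdd k from rfl]
      congr 1
      rw [← ht, ZMod.natCast_val, ZMod.cast_id]
    rw [← SemidirectProduct.inl_left_mul_inr_right g]
    refine mul_mem ?_ ?_
    · have := inl_mem_closure r m g.left.toAdd
      simpa using this
    · rw [hinr]
      have h : xGen r m ^ m ∈ ({xGen r m ^ m} ∪ Set.range (alphaGen r m)) := Or.inl rfl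
      exact Subgroup.pow_mem _ (Subgroup.subset_closure h) t
  · rw [Subgroup.closure_le]
    rintro g hg
    rcases hg with h | ⟨i, rfl⟩
    · rw [Set.mem_singleton_iff] at h
      subst h
      exact piHom_xGen_pow r m
    · exact piHom_inl r m _

lemma splitting_iff (r m : ℕ) [NeZero r] [NeZero m] :
    (∃ s : Multiplicative (ZMod m) →* GrpG r m,
        (piHom r m).comp s = MonoidHom.id _) ↔ Nat.Coprime r m := by
  constructor
  · rintro ⟨s, hs⟩
    have hπ : ∀ g, piHom r m (s g) = g := fun g => by
      rw [← MonoidHom.comp_apply, hs]; rfl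
    set g := s (Multiplicative.ofAdd (1 : ZMod m)) with hg
    set k := (SemidirectProduct.rightHom g).toAdd with hkdef
    have h1 : (ZMod.castHom (dvd_mul_left m r) (ZMod m)) k = 1 := by
      have h := hπ (Multiplicative.ofAdd (1 : ZMod m))
      have h' : Multiplicative.ofAdd ((ZMod.castHom (dvd_mul_left m r) (ZMod m)) k) =
          Multiplicative.ofAdd (1 : ZMod m) := h
      exact Multiplicative.ofAdd.injective h'
    have hgm : g ^ m = 1 := by
      rw [hg, ← map_pow, ← ofAdd_nsmul, nsmul_eq_mul, mul_one, ZMod.natCast_self,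
        ofAdd_zero, map_one]
    have h2 : (m : ZMod (r * m)) * k = 0 := by
      have h3 : (SemidirectProduct.rightHom g) ^ m = 1 := by
        rw [← map_pow, hgm, map_one]
      have h4 : m • k = 0 := by
        rw [hkdef, ← toAdd_pow, h3]; rfl
      rwa [nsmul_eq_mul] at h4
    have hrk : r ∣ k.val := by
      have h5 : ((m * k.val : ℕ) : ZMod (r * m)) = 0 := by
        push_cast
        rw [ZMod.natCast_val, ZMod.cast_id]
        exact h2
      obtain ⟨c, hc⟩ := (ZMod.natCast_eq_zero_iff _ _).mp h5
      refine ⟨c, ?_⟩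
      have hm0 : m ≠ 0 := NeZero.ne m
      apply Nat.eq_of_mul_eq_mul_left (Nat.pos_of_ne_zero hm0)
      rw [hc]; ring
    have h1' : ((k.val : ℕ) : ZMod m) = 1 := by
      rw [ZMod.natCast_val]
      rw [ZMod.castHom_apply] at h1
      exact h1
    have hmk : (m : ℤ) ∣ (k.val : ℤ) - 1 := by
      rw [← ZMod.intCast_zmod_eq_zero_iff_dvd]
      push_cast
      rw [h1', sub_self]
    have hd1 : ((Nat.gcd r m : ℤ)) ∣ 1 := by
      have ha : ((Nat.gcd r m : ℤ)) ∣ (k.val : ℤ) :=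
        dvd_trans (Int.natCast_dvd_natCast.mpr (Nat.gcd_dvd_left r m))
          (Int.natCast_dvd_natCast.mpr hrk)
      have hb : ((Nat.gcd r m : ℤ)) ∣ (k.val : ℤ) - 1 :=
        dvd_trans (Int.natCast_dvd_natCast.mpr (Nat.gcd_dvd_right r m)) hmk
      have := dvd_sub ha hb
      simpa using this
    have : Nat.gcd r m ∣ 1 := by exact_mod_cast hd1
    exact Nat.dvd_one.mp this
  · intro hco
    have hic : IsCoprime (r : ℤ) (m : ℤ) := by
      rw [Int.isCoprime_iff_gcd_eq_one, Int.gcd_natCast_natCast]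
      exact hco
    obtain ⟨a, b, hab⟩ := hic
    set k : ZMod (r * m) := ((a * r : ℤ) : ZMod (r * m)) with hk
    have hcond : zmultiplesHom (ZMod (r * m)) k (m : ℤ) = 0 := by
      show (m : ℤ) • k = 0
      rw [hk, zsmul_eq_mul, ← Int.cast_natCast, ← Int.cast_mul,
        ZMod.intCast_zmod_eq_zero_iff_dvd]
      exact ⟨a, by push_cast; ring⟩
    refine ⟨SemidirectProduct.inr.comp (AddMonoidHom.toMultiplicative
      (ZMod.lift m ⟨zmultiplesHom (ZMod (r * m)) k, hcond⟩)), ?_⟩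
    refine MonoidHom.ext fun g => ?_
    show piHom r m (SemidirectProduct.inr (Multiplicative.ofAdd
      (ZMod.lift m ⟨zmultiplesHom (ZMod (r * m)) k, hcond⟩ g.toAdd))) = g
    rw [piHom_inr]
    have hcastk : (ZMod.castHom (dvd_mul_left m r) (ZMod m)) k = 1 := by
      rw [hk, map_intCast]
      have : ((a * r : ℤ) : ZMod m) = ((1 - b * m : ℤ) : ZMod m) := by
        rw [← hab]; push_cast; ring_nf
      rw [this]
      push_cast
      simp [ZMod.natCast_self]
    have hz : g.toAdd = (((g.toAdd.val : ℤ)) : ZMod m) := by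
      push_cast
      rw [ZMod.natCast_val, ZMod.cast_id]
    rw [hz, ZMod.lift_coe]
    show Multiplicative.ofAdd ((ZMod.castHom (dvd_mul_left m r) (ZMod m))
      ((((Multiplicative.toAdd g).val : ℤ)) • k)) = g
    rw [map_zsmul, hcastk, zsmul_eq_mul, mul_one, ← hz]
    exact ofAdd_toAdd g

/-- Let `G = (ZMod r)^{n-1} ⋊ ZMod (r(n-1))` and let `N` be the subgroup generated by the
`α_i` together with `α_0 = x^{n-1}`.  Then `G/N` is cyclic of order `n-1` (i.e. there is a
surjection `π : G → ZMod (n-1)` with kernel `N`), and the extension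
`1 → N → G → ZMod (n-1) → 1` splits if and only if `r` is coprime to `n-1`. -/
theorem quotient_cyclic_and_splitting_iff_coprime (n r : ℕ) (hn : 2 ≤ n) (hr : 2 ≤ r) :
    ∃ π : GrpG r (n - 1) →* Multiplicative (ZMod (n - 1)),
      Function.Surjective π ∧
      π.ker = Subgroup.closure ({xGen r (n - 1) ^ (n - 1)} ∪ Set.range (alphaGen r (n - 1))) ∧
      ((∃ s : Multiplicative (ZMod (n - 1)) →* GrpG r (n - 1),
          π.comp s = MonoidHom.id _) ↔ Nat.Coprime r (n - 1)) := by
  haveI : NeZero (n - 1) := ⟨by omega⟩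
  haveI : NeZero r := ⟨by omega⟩
  exact ⟨piHom r (n - 1), piHom_surjective r (n - 1), piHom_ker r (n - 1),
    splitting_iff r (n - 1)⟩
end

section
/- In the group G = (Z/r)^{n−1} ⋊_ψ Z/(r(n−1)) with ψ cyclically permuting generators α_1,…,α_{n−1}, for any element v = α_0^{m_0} α_1^{m_1} ⋯ α_{n−1}^{m_{n−1}} with α_0 = x^{n−1}, one has (vx)^{n−1} = α_0^{m_0(n−1)+1} μ^{m_1+⋯+m_{n−1}}, where μ = α_1 α_2 ⋯ α_{n−1}. -/
-- Auxiliary lemmas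

section Aux
variable (r M : ℕ)

lemma perm_apply (σ : Equiv.Perm (Fin M)) (f : Fin M → ZMod r) :
    permMulAut r M σ (Multiplicative.ofAdd f) = Multiplicative.ofAdd (f ∘ σ.symm) := rfl

lemma action_cast (c : ℤ) (f : Fin M → ZMod r) :
    cycleActionHom r M (Multiplicative.ofAdd ((c : ZMod (r * M)))) (Multiplicative.ofAdd f)
      = Multiplicative.ofAdd (f ∘ ((finRotate M ^ c)⁻¹ : Equiv.Perm (Fin M))) := by
  show (Additive.toMul ((ZMod.lift (r * M) ⟨zShiftHom r M, zShiftHom_eq_zero r M⟩)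
      ((c : ZMod (r * M))))) (Multiplicative.ofAdd f) = _
  rw [ZMod.lift_coe]
  show (permMulAut r M (finRotate M) ^ c) (Multiplicative.ofAdd f) = _
  rw [← map_zpow]
  rfl

lemma sdp_pow {N G : Type*} [Group N] [Group G] {φ : G →* MulAut N} (a : N) (b : G) :
    ∀ k : ℕ, (⟨a, b⟩ : N ⋊[φ] G) ^ k
      = ⟨(List.ofFn fun j : Fin k => φ (b ^ (j : ℕ)) a).prod, b ^ k⟩
  | 0 => by ext <;> simp
  | (k + 1) => by
      rw [pow_succ, sdp_pow a b k]
      ext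
      · show (List.ofFn fun j : Fin k => φ (b ^ (j : ℕ)) a).prod * φ (b ^ k) a = _
        rw [List.ofFn_succ', List.concat_eq_append, List.prod_append, List.prod_singleton]
        simp only [Fin.coe_castSucc, Fin.val_last]
      · show b ^ k * b = b ^ (k + 1)
        rw [pow_succ]

end Aux

section Aux2
variable (r M : ℕ)
open Fin.NatCast

lemma xGen_zpow (j : ℤ) :
    xGen r M ^ j = SemidirectProduct.inr (Multiplicative.ofAdd ((j : ZMod (r * M)))) := by
  rw [xGen, ← map_zpow]
  congr 1
  rw [← ofAdd_zsmul, zsmul_eq_mul, mul_one]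

lemma alphaGen_zpow (i : Fin M) (j : ℤ) :
    alphaGen r M i ^ j
      = SemidirectProduct.inl (Multiplicative.ofAdd (Pi.single i ((j : ZMod r)))) := by
  rw [alphaGen, ← map_zpow]
  congr 1
  rw [← ofAdd_zsmul]
  congr 1
  rw [← Pi.single_smul, zsmul_eq_mul, mul_one]

lemma alpha_prod (g : Fin M → ℤ) :
    (List.ofFn fun i => alphaGen r M i ^ g i).prod
      = SemidirectProduct.inl (Multiplicative.ofAdd (fun i => (g i : ZMod r))) := by
  simp_rw [alphaGen_zpow]
  have h1 : (fun i => SemidirectProduct.inl (φ := cycleActionHom r M)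
        (Multiplicative.ofAdd (Pi.single i ((g i : ZMod r)))))
      = SemidirectProduct.inl ∘ (fun i => Multiplicative.ofAdd (Pi.single i ((g i : ZMod r)))) :=
    rfl
  rw [h1, ← List.map_ofFn, List.prod_hom]
  congr 1
  rw [List.prod_ofFn]
  show (∏ i, Multiplicative.ofAdd (Pi.single i ((g i : ZMod r)))) = _
  rw [← ofAdd_sum]
  congr 1
  exact Finset.univ_sum_single _

lemma rot_reduce (c d : ℤ) : finRotate M ^ ((M : ℤ) * c + d) = finRotate M ^ d := by
  rw [zpow_add, zpow_mul, zpow_natCast, finRotate_pow_self, one_zpow, one_mul]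

lemma rot_pow_apply (m j : ℕ) (i : Fin (m + 1)) :
    (finRotate (m + 1) ^ j) i = i + (j : Fin (m + 1)) := by
  induction j with
  | zero => simp
  | succ j ih =>
      rw [pow_succ', Equiv.Perm.mul_apply, ih, finRotate_succ_apply]
      rw [Nat.cast_add, Nat.cast_one, add_assoc]

lemma rot_inv_apply (m j : ℕ) (i : Fin (m + 1)) :
    (finRotate (m + 1) ^ j)⁻¹ i = i - (j : Fin (m + 1)) := by
  have : ((finRotate (m + 1) ^ j)⁻¹ : Equiv.Perm (Fin (m+1))) i
      = ((finRotate (m + 1) ^ j) : Equiv.Perm (Fin (m+1))).symm i := rfl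
  rw [this, Equiv.symm_apply_eq, rot_pow_apply, sub_add_cancel]

lemma shift_sum (m : ℕ) (F : Fin (m + 1) → ZMod r) (i : Fin (m + 1)) :
    ∑ j : Fin (m + 1), F (i - j) = ∑ k, F k :=
  Fintype.sum_equiv (Equiv.subLeft i) _ _ (fun _ => rfl)

end Aux2

lemma rot_reduce0 (M : ℕ) (c : ℤ) : finRotate M ^ ((M : ℤ) * c) = 1 := by
  rw [zpow_mul, zpow_natCast, finRotate_pow_self, one_zpow]

open Fin.NatCast in
theorem main_aux (r m : ℕ) (m0 : ℤ) (mv : Fin (m + 1) → ℤ) :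
    ((xGen r (m + 1) ^ (m + 1)) ^ m0 * (List.ofFn (fun i => alphaGen r (m + 1) i ^ mv i)).prod
        * xGen r (m + 1)) ^ (m + 1)
      = (xGen r (m + 1) ^ (m + 1)) ^ (m0 * ((m + 1 : ℕ) : ℤ) + 1)
        * (List.ofFn (fun i => alphaGen r (m + 1) i)).prod ^ (∑ i, mv i) := by
  have hxM : ∀ c : ℤ, (xGen r (m + 1) ^ (m + 1)) ^ c = xGen r (m + 1) ^ (((m + 1 : ℕ) : ℤ) * c) := by
    intro c; rw [← zpow_natCast (xGen r (m + 1)), ← zpow_mul]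
  have hx1 : xGen r (m + 1)
      = SemidirectProduct.inr (Multiplicative.ofAdd (((1 : ℤ) : ZMod (r * (m + 1))))) := by
    rw [← zpow_one (xGen r (m + 1)), xGen_zpow]
  -- trivial action of multiples of m+1
  have htriv : ∀ c : ℤ, ∀ g : Fin (m + 1) → ZMod r,
      cycleActionHom r (m + 1)
        (Multiplicative.ofAdd (((((m + 1 : ℕ) : ℤ) * c : ℤ) : ZMod (r * (m + 1)))))
        (Multiplicative.ofAdd g) = Multiplicative.ofAdd g := by
    intro c g
    rw [action_cast, rot_reduce0, inv_one]
    rfl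
  -- Step 1 : the base element v*x
  have hv : (xGen r (m + 1) ^ (m + 1)) ^ m0
        * (List.ofFn fun i => alphaGen r (m + 1) i ^ mv i).prod * xGen r (m + 1)
      = ⟨Multiplicative.ofAdd (fun i => (mv i : ZMod r)), Multiplicative.ofAdd (((((m + 1 : ℕ) : ℤ) * m0 + 1 : ℤ) : ZMod (r * (m + 1))))⟩ := by
    rw [hxM, xGen_zpow, alpha_prod, hx1]
    ext
    · simp only [SemidirectProduct.mul_left, SemidirectProduct.left_inl,
        SemidirectProduct.right_inl, SemidirectProduct.left_inr, SemidirectProduct.right_inr,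
        map_one, mul_one, one_mul, MulAut.one_apply]
      rw [htriv]
    · simp only [SemidirectProduct.mul_right, SemidirectProduct.right_inl,
        SemidirectProduct.right_inr, mul_one]
      rw [← ofAdd_add]
      congr 1
      push_cast
      ring
  -- Step 2 : terms in the power expansion
  have hterm : ∀ j : Fin (m + 1),
      cycleActionHom r (m + 1) ((Multiplicative.ofAdd (((((m + 1 : ℕ) : ℤ) * m0 + 1 : ℤ) : ZMod (r * (m + 1))))) ^ (j : ℕ))
          (Multiplicative.ofAdd (fun i => (mv i : ZMod r)))
        = Multiplicative.ofAdd (fun i => ((mv (i - ((j : ℕ) : Fin (m + 1))) : ZMod r))) := by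
    intro j
    have h1 : (Multiplicative.ofAdd (((((m + 1 : ℕ) : ℤ) * m0 + 1 : ℤ) : ZMod (r * (m + 1))))) ^ (j : ℕ)
        = Multiplicative.ofAdd (((((j : ℕ) : ℤ) * (((m + 1 : ℕ) : ℤ) * m0 + 1) : ℤ) : ZMod (r * (m + 1)))) := by
      rw [← ofAdd_nsmul]
      congr 1
      rw [nsmul_eq_mul]
      push_cast
      ring
    rw [h1, action_cast]
    have h2 : finRotate (m + 1) ^ (((j : ℕ) : ℤ) * (((m + 1 : ℕ) : ℤ) * m0 + 1))
        = finRotate (m + 1) ^ ((j : ℕ)) := by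
      rw [show ((j : ℕ) : ℤ) * (((m + 1 : ℕ) : ℤ) * m0 + 1)
          = ((m + 1 : ℕ) : ℤ) * (((j : ℕ) : ℤ) * m0) + ((j : ℕ) : ℤ) by ring,
        rot_reduce, zpow_natCast]
    rw [h2]
    congr 1
    funext i
    exact congrArg (fun k => ((mv k : ZMod r))) (rot_inv_apply m (j : ℕ) i)
  -- Step 3 : mu
  have hmu : (List.ofFn fun i => alphaGen r (m + 1) i).prod
      = SemidirectProduct.inl (Multiplicative.ofAdd (fun _ : Fin (m + 1) => ((1 : ℤ) : ZMod r))) := by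
    have h := alpha_prod r (m + 1) (fun _ => (1 : ℤ))
    simpa only [zpow_one] using h
  have hmuS : (List.ofFn fun i => alphaGen r (m + 1) i).prod ^ (∑ i, mv i)
      = SemidirectProduct.inl
          (Multiplicative.ofAdd (fun _ : Fin (m + 1) => ((∑ i, mv i : ℤ) : ZMod r))) := by
    rw [hmu, ← map_zpow]
    congr 1
    rw [← ofAdd_zsmul]
    congr 1
    funext i
    rw [Pi.smul_apply, Int.cast_one, zsmul_eq_mul, mul_one]
  -- Step 4 : RHS
  have hR : (xGen r (m + 1) ^ (m + 1)) ^ (m0 * ((m + 1 : ℕ) : ℤ) + 1)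
        * (List.ofFn fun i => alphaGen r (m + 1) i).prod ^ (∑ i, mv i)
      = ⟨Multiplicative.ofAdd (fun _ : Fin (m + 1) => ((∑ i, mv i : ℤ) : ZMod r)),
          Multiplicative.ofAdd
            (((((m + 1 : ℕ) : ℤ) * (m0 * ((m + 1 : ℕ) : ℤ) + 1) : ℤ) : ZMod (r * (m + 1))))⟩ := by
    rw [hxM, xGen_zpow, hmuS]
    ext
    · simp only [SemidirectProduct.mul_left, SemidirectProduct.left_inl,
        SemidirectProduct.left_inr, SemidirectProduct.right_inr, one_mul]
      rw [htriv]
    · simp only [SemidirectProduct.mul_right, SemidirectProduct.right_inl,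
        SemidirectProduct.right_inr, mul_one]
  -- Conclusion
  rw [hv, hR, sdp_pow]
  ext : 1
  · simp only [hterm]
    rw [List.prod_ofFn]
    show (∏ j : Fin (m + 1),
        Multiplicative.ofAdd (fun i => ((mv (i - ((j : ℕ) : Fin (m + 1))) : ZMod r)))) = _
    rw [← ofAdd_sum]
    congr 1
    funext i
    rw [Finset.sum_apply]
    simp only [Fin.cast_val_eq_self]
    rw [shift_sum r m (fun k => ((mv k : ZMod r))) i]
    push_cast
    rfl
  · show (Multiplicative.ofAdd (((((m + 1 : ℕ) : ℤ) * m0 + 1 : ℤ) : ZMod (r * (m + 1))))) ^ (m + 1) = _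
    rw [← ofAdd_nsmul]
    congr 1
    rw [nsmul_eq_mul]
    push_cast
    ring

/-- In `G = (ZMod r)^{n-1} ⋊ ZMod (r(n-1))`, for `v = α_0^{m_0} α_1^{m_1} ⋯ α_{n-1}^{m_{n-1}}`
with `α_0 = x^{n-1}`, one has
`(vx)^{n-1} = α_0^{m_0(n-1)+1} μ^{m_1+⋯+m_{n-1}}` where `μ = α_1 ⋯ α_{n-1}`. -/
theorem vx_pow_formula (n r : ℕ) (hn : 2 ≤ n) (hr : 2 ≤ r)
    (m0 : ℤ) (mv : Fin (n - 1) → ℤ) :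
    ((xGen r (n - 1) ^ (n - 1)) ^ m0 * (List.ofFn (fun i => alphaGen r (n - 1) i ^ mv i)).prod
        * xGen r (n - 1)) ^ (n - 1)
      = (xGen r (n - 1) ^ (n - 1)) ^ (m0 * ((n - 1 : ℕ) : ℤ) + 1)
        * (List.ofFn (fun i => alphaGen r (n - 1) i)).prod ^ (∑ i, mv i) := by
  obtain ⟨k, rfl⟩ : ∃ k, n = k + 2 := ⟨n - 2, by omega⟩
  exact main_aux r k m0 mv
end

section
/- Let n ≥ 5 and suppose A_n acts on a finite set Ω with an orbit of size n. Then the stabilizer of any point in that orbit is isomorphic to A_{n−1} and acts transitively on the other n−1 points of the orbit. -/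
open Equiv Equiv.Perm MulAction Finset

private lemma AN.exists_even_fixing (n : ℕ) (hn : 5 ≤ n) (a b c : Fin n)
    (hb : b ≠ a) (hc : c ≠ a) :
    ∃ σ : Perm (Fin n), Perm.sign σ = 1 ∧ σ a = a ∧ σ b = c := by
  classical
  by_cases hbc : b = c
  · exact ⟨1, by simp, by simp, by simp [hbc]⟩
  · have hcard : 1 < (Finset.univ \ {a, b, c} : Finset (Fin n)).card := by
      have h1 : ({a, b, c} : Finset (Fin n)).card ≤ 3 :=
        (Finset.card_insert_le _ _).trans (Nat.succ_le_succ
          ((Finset.card_insert_le _ _).trans (by simp)))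
      have h2 := Finset.card_sdiff_of_subset (Finset.subset_univ ({a, b, c} : Finset (Fin n)))
      rw [h2]
      simp only [Finset.card_univ, Fintype.card_fin]
      omega
    obtain ⟨d, hd, e, he, hde⟩ := Finset.one_lt_card.1 hcard
    simp only [Finset.mem_sdiff, Finset.mem_insert, Finset.mem_singleton, not_or] at hd he
    refine ⟨Equiv.swap b c * Equiv.swap d e, ?_, ?_, ?_⟩
    · rw [map_mul, Equiv.Perm.sign_swap hbc, Equiv.Perm.sign_swap hde]
      norm_num
    · rw [Equiv.Perm.mul_apply,
        Equiv.swap_apply_of_ne_of_ne (fun h => hd.2.1 h.symm) (fun h => he.2.1 h.symm),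
        Equiv.swap_apply_of_ne_of_ne (Ne.symm hb) (Ne.symm hc)]
    · rw [Equiv.Perm.mul_apply,
        Equiv.swap_apply_of_ne_of_ne (fun h => hd.2.2.1 h.symm) (fun h => he.2.2.1 h.symm),
        Equiv.swap_apply_left]

/-- Any nontrivial normal subgroup of `A_n`, `n ≥ 5`, is everything. -/
private lemma AN.normal_eq_top {n : ℕ} (hn : 5 ≤ n)
    (N : Subgroup (alternatingGroup (Fin n))) (hnorm : N.Normal) (hN : N ≠ ⊥) :
    N = ⊤ := by
  classical
  obtain ⟨σh, hσN, hσ1⟩ : ∃ x ∈ N, x ≠ 1 :=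
    (N.bot_or_exists_ne_one).resolve_left hN
  set σ : Perm (Fin n) := (σh : Perm (Fin n)) with hσdef
  have hσne : σ ≠ 1 := fun h => hσ1 (Subtype.ext h)
  obtain ⟨a, ha⟩ : ∃ a, σ a ≠ a := by
    by_contra h
    push_neg at h
    exact hσne (Equiv.ext fun x => h x)
  set b : Fin n := σ a with hbdef
  have hba : b ≠ a := ha
  obtain ⟨c, hc⟩ : ∃ c, c ∉ ({a, b, σ⁻¹ a} : Finset (Fin n)) := by
    by_contra h
    push_neg at h
    have h1 : (Finset.univ : Finset (Fin n)).card ≤ ({a, b, σ⁻¹ a} : Finset (Fin n)).card :=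
      Finset.card_le_card (fun x _ => h x)
    have h2 : ({a, b, σ⁻¹ a} : Finset (Fin n)).card ≤ 3 :=
      (Finset.card_insert_le _ _).trans (Nat.succ_le_succ
        ((Finset.card_insert_le _ _).trans (by simp)))
    rw [Finset.card_univ, Fintype.card_fin] at h1
    omega
  simp only [Finset.mem_insert, Finset.mem_singleton, not_or] at hc
  obtain ⟨hca, hcb, hcs⟩ := hc
  -- the 3-cycle τ = (a ↦ c ↦ b ↦ a)
  set τ : Perm (Fin n) := Equiv.swap a c * Equiv.swap c b with hτdef
  have hτa : τ a = c := by
    rw [hτdef, Equiv.Perm.mul_apply,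
      Equiv.swap_apply_of_ne_of_ne (Ne.symm hca) (fun h => hba h.symm),
      Equiv.swap_apply_left]
  have hτc : τ c = b := by
    rw [hτdef, Equiv.Perm.mul_apply, Equiv.swap_apply_left,
      Equiv.swap_apply_of_ne_of_ne hba (Ne.symm hcb)]
  have hτb : τ b = a := by
    rw [hτdef, Equiv.Perm.mul_apply, Equiv.swap_apply_right, Equiv.swap_apply_right]
  have hτfix : ∀ x, x ≠ a → x ≠ b → x ≠ c → τ x = x := by
    intro x hxa hxb hxc
    rw [hτdef, Equiv.Perm.mul_apply, Equiv.swap_apply_of_ne_of_ne hxc hxb,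
      Equiv.swap_apply_of_ne_of_ne hxa hxc]
  have hτsign : Perm.sign τ = 1 := by
    rw [hτdef, map_mul, Equiv.Perm.sign_swap (Ne.symm hca), Equiv.Perm.sign_swap hcb]
    norm_num
  set τh : alternatingGroup (Fin n) := ⟨τ, Equiv.Perm.mem_alternatingGroup.2 hτsign⟩ with hτh
  set ρh : alternatingGroup (Fin n) := σh * τh * σh⁻¹ * τh⁻¹ with hρh
  have hρN : ρh ∈ N := by
    have h1 : τh * σh⁻¹ * τh⁻¹ ∈ N := hnorm.conj_mem _ (N.inv_mem hσN) τh
    have h2 := N.mul_mem hσN h1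
    rw [hρh]
    convert h2 using 1
    simp only [mul_assoc]
  set ρ : Perm (Fin n) := (ρh : Perm (Fin n)) with hρdef
  have hρ : ρ = σ * τ * σ⁻¹ * τ⁻¹ := rfl
  have hρeven : Perm.sign ρ = 1 := Equiv.Perm.mem_alternatingGroup.1 ρh.2
  -- ρ moves a to σ c ≠ a
  have hτinva : τ⁻¹ a = b := by rw [← hτb, Equiv.Perm.coe_inv, Equiv.symm_apply_apply]
  have hρa : ρ a = σ c := by
    rw [hρ, Equiv.Perm.mul_apply, Equiv.Perm.mul_apply, Equiv.Perm.mul_apply, hτinva,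
      hbdef, Equiv.Perm.coe_inv, Equiv.symm_apply_apply, hτa]
  have hρane : ρ a ≠ a := by
    rw [hρa]
    intro h
    exact hcs (by rw [← h, Equiv.Perm.coe_inv, Equiv.symm_apply_apply])
  have hρne : ρ ≠ 1 := fun h => hρane (by rw [h]; rfl)
  -- ρ is supported on S
  set S : Finset (Fin n) := {a, b, c, σ b, σ c} with hSdef
  have hsupp : ∀ x : Fin n, x ∉ S → ρ x = x := by
    intro x hx
    simp only [hSdef, Finset.mem_insert, Finset.mem_singleton, not_or] at hx
    obtain ⟨hxa, hxb, hxc, hxsb, hxsc⟩ := hx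
    have hτx : τ⁻¹ x = x := by
      have h := hτfix x hxa hxb hxc
      nth_rewrite 1 [← h]
      exact Equiv.symm_apply_apply τ x
    have hσx : τ (σ⁻¹ x) = σ⁻¹ x := by
      apply hτfix
      · intro h; exact hxb (by rw [hbdef, ← h, Equiv.Perm.coe_inv, Equiv.apply_symm_apply])
      · intro h; exact hxsb (by rw [← h, Equiv.Perm.coe_inv, Equiv.apply_symm_apply])
      · intro h; exact hxsc (by rw [← h, Equiv.Perm.coe_inv, Equiv.apply_symm_apply])
    rw [hρ, Equiv.Perm.mul_apply, Equiv.Perm.mul_apply, Equiv.Perm.mul_apply, hτx, hσx,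
      Equiv.Perm.coe_inv, Equiv.apply_symm_apply]
  have hScard : S.card ≤ 5 := by
    refine (Finset.card_insert_le _ _).trans (Nat.succ_le_succ ?_)
    refine (Finset.card_insert_le _ _).trans (Nat.succ_le_succ ?_)
    refine (Finset.card_insert_le _ _).trans (Nat.succ_le_succ ?_)
    exact (Finset.card_insert_le _ _).trans (by simp)
  obtain ⟨T, hST, hTuniv, hT5⟩ :=
    Finset.exists_subsuperset_card_eq (Finset.subset_univ S) hScard
      (by rw [Finset.card_univ, Fintype.card_fin]; omega)
  have hsuppT : ∀ x : Fin n, x ∉ T → ρ x = x := fun x hx =>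
    hsupp x (fun h => hx (hST h))
  set ι : Fin 5 ≃ {x : Fin n // x ∈ T} := (T.equivFinOfCardEq hT5).symm with hι
  have hmemiff : ∀ x : Fin n, x ∈ T ↔ ρ x ∈ T := by
    intro x
    constructor
    · intro hx
      by_contra h
      have h1 : ρ (ρ x) = ρ x := hsuppT _ h
      have h2 : ρ x = x := ρ.injective h1
      rw [h2] at h
      exact h hx
    · intro hx
      by_contra h
      rw [hsuppT x h] at hx
      exact h hx
  set ρ1 : Perm {x : Fin n // x ∈ T} := ρ.subtypePerm (fun x => (hmemiff x).symm) with hρ1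
  set ρ0 : Perm (Fin 5) := (Equiv.permCongr ι).symm ρ1 with hρ0
  have hρ0apply : ∀ y : Fin 5, ρ0 y = ι.symm (ρ1 (ι y)) := fun y => rfl
  have hEρ : ρ0.extendDomain ι = ρ := by
    ext x
    by_cases hx : x ∈ T
    · rw [Equiv.Perm.extendDomain_apply_subtype _ ι hx]
      rw [hρ0apply]
      simp only [Equiv.apply_symm_apply]
      rfl
    · rw [Equiv.Perm.extendDomain_apply_not_subtype _ ι hx, hsuppT x hx]
  have hρ0even : ρ0 ∈ alternatingGroup (Fin 5) := by
    rw [Equiv.Perm.mem_alternatingGroup]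
    have := Equiv.Perm.sign_extendDomain ρ0 ι
    rw [hEρ] at this
    rw [this] at hρeven
    exact hρeven
  have hρ0ne : ρ0 ≠ 1 := by
    intro h
    rw [h, Equiv.Perm.extendDomain_one] at hEρ
    exact hρne hEρ.symm
  -- transfer homomorphism
  set F : alternatingGroup (Fin 5) →* alternatingGroup (Fin n) :=
    { toFun := fun u => ⟨(u : Perm (Fin 5)).extendDomain ι,
        Equiv.Perm.mem_alternatingGroup.2 (by
          rw [Equiv.Perm.sign_extendDomain]
          exact Equiv.Perm.mem_alternatingGroup.1 u.2)⟩,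
      map_one' := Subtype.ext (Equiv.Perm.extendDomain_one ι),
      map_mul' := fun u v =>
        Subtype.ext (Equiv.Perm.extendDomain_mul ι (u : Perm (Fin 5)) (v : Perm (Fin 5))).symm }
    with hF
  set K : Subgroup (alternatingGroup (Fin 5)) := N.comap F with hK
  haveI hKnorm : K.Normal := hnorm.comap F
  have hKne : K ≠ ⊥ := by
    intro h
    have hmem : (⟨ρ0, hρ0even⟩ : alternatingGroup (Fin 5)) ∈ K := by
      rw [hK, Subgroup.mem_comap]
      have : F ⟨ρ0, hρ0even⟩ = ρh := Subtype.ext hEρ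
      rw [this]
      exact hρN
    rw [h, Subgroup.mem_bot] at hmem
    exact hρ0ne (Subtype.ext_iff.1 hmem)
  have hKtop : K = ⊤ := (hKnorm.eq_bot_or_eq_top).resolve_left hKne
  -- a three-cycle in N
  set δ : Perm (Fin 5) := Equiv.swap 0 1 * Equiv.swap 0 2 with hδ
  have hδ3 : Equiv.Perm.IsThreeCycle δ :=
    Equiv.Perm.isThreeCycle_swap_mul_swap_same (by decide) (by decide) (by decide)
  have hδE3 : Equiv.Perm.IsThreeCycle (δ.extendDomain ι) := by
    rw [Equiv.Perm.IsThreeCycle] at hδ3 ⊢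
    rw [Equiv.Perm.cycleType_extendDomain]
    exact hδ3
  have hδN : F ⟨δ, hδ3.mem_alternatingGroup⟩ ∈ N := by
    have : (⟨δ, hδ3.mem_alternatingGroup⟩ : alternatingGroup (Fin 5)) ∈ K := by
      rw [hKtop]; trivial
    rwa [hK, Subgroup.mem_comap] at this
  haveI : N.Normal := hnorm
  have hcl := hδE3.alternating_normalClosure
    (by rw [Nat.card_eq_fintype_card, Fintype.card_fin]; exact hn)
  rw [eq_top_iff, ← hcl]
  apply Subgroup.normalClosure_le_normal
  intro u hu
  rw [Set.mem_singleton_iff] at hu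
  rw [hu]
  exact hδN

/-- Any subgroup of `Perm (Fin n)` of index 2 is the alternating group. -/
private lemma AN.eq_alternating_of_index_two {n : ℕ} (hn : 5 ≤ n)
    (H : Subgroup (Perm (Fin n))) (h2 : H.index = 2) :
    H = alternatingGroup (Fin n) := by
  classical
  haveI : Nontrivial (Fin n) := ⟨⟨⟨0, by omega⟩, ⟨1, by omega⟩, by simp [Fin.ext_iff]⟩⟩
  have hle : alternatingGroup (Fin n) ≤ H := by
    rw [← Equiv.Perm.closure_three_cycles_eq_alternating]
    rw [Subgroup.closure_le]
    intro f hf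
    have h3 : orderOf f = 3 := Equiv.Perm.IsThreeCycle.orderOf hf
    have had : (f ^ 2) ^ 2 ∈ H := Subgroup.sq_mem_of_index_two h2 (f ^ 2)
    have : (f ^ 2) ^ 2 = f := by
      rw [← pow_mul]
      have : f ^ 4 = f ^ 3 * f := pow_succ f 3
      rw [show (2 * 2 : ℕ) = 4 from rfl, this, ← h3, pow_orderOf_eq_one, one_mul]
    rwa [this] at had
  have hAindex : (alternatingGroup (Fin n)).index = 2 := by
    have hc := Subgroup.card_mul_index (alternatingGroup (Fin n))
    have h2c : 2 * Nat.card (alternatingGroup (Fin n)) = Nat.card (Perm (Fin n)) := by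
      rw [Nat.card_eq_fintype_card, Nat.card_eq_fintype_card]
      exact two_mul_card_alternatingGroup
    have hpos : 0 < Nat.card (alternatingGroup (Fin n)) := Nat.card_pos
    have hkey : Nat.card (alternatingGroup (Fin n)) * (alternatingGroup (Fin n)).index
        = Nat.card (alternatingGroup (Fin n)) * 2 := by
      rw [hc, ← h2c, Nat.mul_comm]
    exact Nat.eq_of_mul_eq_mul_left hpos hkey
  have hrel := Subgroup.relIndex_mul_index hle
  rw [h2, hAindex] at hrel
  have : (alternatingGroup (Fin n)).relIndex H = 1 := by omega
  have hle2 : H ≤ alternatingGroup (Fin n) := Subgroup.relIndex_eq_one.1 this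
  exact le_antisymm hle2 hle

/-- The stabilizer in `A_n` of a point of `Fin n` is isomorphic to `A_{n-1}`. -/
private noncomputable def AN.stabIso {n : ℕ} (hn : 5 ≤ n) (a : Fin n) :
    MulAction.stabilizer (alternatingGroup (Fin n)) a ≃* alternatingGroup (Fin (n - 1)) := by
  classical
  have hcard : Fintype.card (Fin (n - 1)) = Fintype.card {b : Fin n // b ≠ a} := by
    rw [Fintype.card_fin]
    have : Fintype.card {b : Fin n // b ≠ a} = Fintype.card (Fin n) - 1 := by
      simp [Fintype.card_subtype_compl, Fintype.card_fin]
    rw [this, Fintype.card_fin]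
  let ι : Fin (n - 1) ≃ {b : Fin n // b ≠ a} := Fintype.equivOfCardEq hcard
  let F : alternatingGroup (Fin (n - 1)) →* MulAction.stabilizer (alternatingGroup (Fin n)) a :=
    { toFun := fun u =>
        ⟨⟨(u : Perm (Fin (n - 1))).extendDomain ι,
          Equiv.Perm.mem_alternatingGroup.2 (by
            rw [Equiv.Perm.sign_extendDomain]
            exact Equiv.Perm.mem_alternatingGroup.1 u.2)⟩,
          by
            rw [MulAction.mem_stabilizer_iff]
            show ((u : Perm (Fin (n - 1))).extendDomain ι) a = a
            exact Equiv.Perm.extendDomain_apply_not_subtype _ ι (by simp)⟩,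
      map_one' := by
        apply Subtype.ext; apply Subtype.ext
        exact Equiv.Perm.extendDomain_one ι,
      map_mul' := fun u v => by
        apply Subtype.ext; apply Subtype.ext
        exact (Equiv.Perm.extendDomain_mul ι _ _).symm }
  have hFinj : Function.Injective F := by
    intro u v huv
    apply Subtype.ext
    have h1 : (u : Perm (Fin (n - 1))).extendDomain ι =
        (v : Perm (Fin (n - 1))).extendDomain ι := by
      have := Subtype.ext_iff.1 (Subtype.ext_iff.1 huv)
      exact this
    exact Equiv.Perm.extendDomainHom_injective ι (by exact h1)
  have hFsurj : Function.Surjective F := by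
    rintro ⟨⟨τ, hτalt⟩, hτstab⟩
    rw [MulAction.mem_stabilizer_iff] at hτstab
    have hτa : τ a = a := hτstab
    have hiff : ∀ x : Fin n, x ≠ a ↔ τ x ≠ a := by
      intro x
      constructor
      · intro hx h
        exact hx (τ.injective (h.trans hτa.symm))
      · intro hx h
        rw [h] at hx
        exact hx hτa
    let τ1 : Perm {b : Fin n // b ≠ a} := τ.subtypePerm (fun x => (hiff x).symm)
    let σ : Perm (Fin (n - 1)) := (Equiv.permCongr ι).symm τ1
    have hEσ : σ.extendDomain ι = τ := by
      ext x
      by_cases hx : x ≠ a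
      · rw [Equiv.Perm.extendDomain_apply_subtype _ ι hx]
        have hστ : σ (ι.symm ⟨x, hx⟩) = ι.symm (τ1 ⟨x, hx⟩) := by
          simp only [σ, Equiv.permCongr_symm, Equiv.permCongr_apply, Equiv.symm_symm,
            Equiv.apply_symm_apply]
        rw [hστ, Equiv.apply_symm_apply]
        rfl
      · push_neg at hx
        rw [hx, Equiv.Perm.extendDomain_apply_not_subtype _ ι (by simp), hτa]
    have hσalt : σ ∈ alternatingGroup (Fin (n - 1)) := by
      rw [Equiv.Perm.mem_alternatingGroup]
      have := Equiv.Perm.sign_extendDomain σ ι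
      rw [hEσ] at this
      rw [← this]
      exact Equiv.Perm.mem_alternatingGroup.1 hτalt
    refine ⟨⟨σ, hσalt⟩, ?_⟩
    apply Subtype.ext; apply Subtype.ext
    exact hEσ
  exact (MulEquiv.ofBijective F ⟨hFinj, hFsurj⟩).symm

/-- Let `n ≥ 5` and let `A_n` act on a finite set `Ω` with an orbit of size `n`.  Then the
stabilizer of any point of that orbit is isomorphic to `A_{n-1}`, and it acts transitively
on the remaining `n - 1` points of the orbit. -/
theorem stabilizer_of_orbit_of_size_n
    (n : ℕ) (hn : 5 ≤ n) (Ω : Type) [Finite Ω]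
    [MulAction (alternatingGroup (Fin n)) Ω] (ω : Ω)
    (horb : Nat.card (MulAction.orbit (alternatingGroup (Fin n)) ω) = n) :
    ∀ x ∈ MulAction.orbit (alternatingGroup (Fin n)) ω,
      Nonempty (MulAction.stabilizer (alternatingGroup (Fin n)) x ≃*
        alternatingGroup (Fin (n - 1))) ∧
      (∀ y ∈ MulAction.orbit (alternatingGroup (Fin n)) ω \ {x},
        ∀ z ∈ MulAction.orbit (alternatingGroup (Fin n)) ω \ {x},
          ∃ g ∈ MulAction.stabilizer (alternatingGroup (Fin n)) x, g • y = z) := by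
  classical
  intro x hx
  set O := MulAction.orbit (alternatingGroup (Fin n)) ω with hO
  let f : alternatingGroup (Fin n) →* Perm O :=
    MulAction.toPermHom (alternatingGroup (Fin n)) O
  let e : O ≃ Fin n := Finite.equivFinOfCardEq horb
  let pc : Perm O ≃* Perm (Fin n) :=
    { toEquiv := e.permCongr
      map_mul' := fun p q => Equiv.ext fun i => by
        simp [Equiv.permCongr_apply, Equiv.Perm.mul_apply] }
  let f' : alternatingGroup (Fin n) →* Perm (Fin n) := pc.toMonoidHom.comp f
  -- the kernel is trivial
  have hker : f'.ker ≠ ⊤ := by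
    intro h
    have h1 : ∀ (g : alternatingGroup (Fin n)) (p : O), g • p = p := by
      intro g p
      have hg : f' g = 1 := by rw [← MonoidHom.mem_ker, h]; trivial
      have hfg : f g = 1 := by
        apply pc.injective
        rw [map_one]
        exact hg
      have := Equiv.ext_iff.1 hfg p
      simpa [f, MulAction.toPermHom] using this
    have hnt : Nontrivial O := by
      have h2 : 1 < Nat.card O := by rw [horb]; omega
      exact (Finite.one_lt_card_iff_nontrivial).1 h2
    obtain ⟨p, q, hpq⟩ := hnt
    obtain ⟨gp, hgp⟩ := p.2
    obtain ⟨gq, hgq⟩ := q.2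
    apply hpq
    apply Subtype.ext
    have hgp' : gp • ω = (p : Ω) := hgp
    have hgq' : gq • ω = (q : Ω) := hgq
    have h3 : (gq * gp⁻¹) • (p : Ω) = (q : Ω) := by
      rw [mul_smul, ← hgp', inv_smul_smul, hgq']
    have h4 := h1 (gq * gp⁻¹) p
    have h5 := Subtype.ext_iff.1 h4
    rw [MulAction.orbit.coe_smul] at h5
    rw [← h3, h5]
  have hkerbot : f'.ker = ⊥ := by
    by_contra h
    exact hker (AN.normal_eq_top hn f'.ker (MonoidHom.normal_ker f') h)
  have hinj : Function.Injective f' := (MonoidHom.ker_eq_bot_iff f').1 hkerbot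
  haveI : Nontrivial (Fin n) := ⟨⟨⟨0, by omega⟩, ⟨1, by omega⟩, by simp [Fin.ext_iff]⟩⟩
  -- the range is the alternating group
  have hrange : f'.range = alternatingGroup (Fin n) := by
    apply AN.eq_alternating_of_index_two hn
    have hc := Subgroup.card_mul_index f'.range
    have hcr : Nat.card f'.range = Nat.card (alternatingGroup (Fin n)) :=
      (Nat.card_congr (MonoidHom.ofInjective hinj).toEquiv).symm
    have h2c : 2 * Nat.card (alternatingGroup (Fin n)) = Nat.card (Perm (Fin n)) := by
      rw [Nat.card_eq_fintype_card, Nat.card_eq_fintype_card]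
      exact two_mul_card_alternatingGroup
    have hpos : 0 < Nat.card f'.range := Nat.card_pos
    have hkey : Nat.card f'.range * f'.range.index = Nat.card f'.range * 2 := by
      rw [hc, ← h2c, hcr, Nat.mul_comm]
    exact Nat.eq_of_mul_eq_mul_left hpos hkey
  let ψ : alternatingGroup (Fin n) ≃* alternatingGroup (Fin n) :=
    (MonoidHom.ofInjective hinj).trans (MulEquiv.subgroupCongr hrange)
  have hψ : ∀ g, ((ψ g : alternatingGroup (Fin n)) : Perm (Fin n)) = f' g := fun g => rfl
  have hcompat : ∀ (g : alternatingGroup (Fin n)) (p : O),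
      ((ψ g : alternatingGroup (Fin n)) : Perm (Fin n)) (e p) = e (g • p) := by
    intro g p
    rw [hψ]
    show pc (f g) (e p) = e (g • p)
    show e ((f g) (e.symm (e p))) = e (g • p)
    rw [Equiv.symm_apply_apply]
    rfl
  have hsmul : ∀ (u : alternatingGroup (Fin n)) (i : Fin n),
      u • i = (u : Perm (Fin n)) i := fun u i => rfl
  set a : Fin n := e ⟨x, hx⟩ with ha
  have hstab : ∀ g : alternatingGroup (Fin n),
      g ∈ MulAction.stabilizer (alternatingGroup (Fin n)) x ↔
      ((ψ g : alternatingGroup (Fin n)) : Perm (Fin n)) a = a := by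
    intro g
    rw [MulAction.mem_stabilizer_iff, ha, hcompat g ⟨x, hx⟩]
    constructor
    · intro h
      congr 1
      apply Subtype.ext
      rw [MulAction.orbit.coe_smul]
      exact h
    · intro h
      have h2 := Subtype.ext_iff.1 (e.injective h)
      rw [MulAction.orbit.coe_smul] at h2
      exact h2
  constructor
  · -- the stabilizer is isomorphic to A_{n-1}
    have hmap : Subgroup.map ψ.toMonoidHom
        (MulAction.stabilizer (alternatingGroup (Fin n)) x)
        = MulAction.stabilizer (alternatingGroup (Fin n)) a := by
      ext u
      rw [Subgroup.mem_map]
      constructor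
      · rintro ⟨g, hg, rfl⟩
        rw [MulAction.mem_stabilizer_iff]
        rw [hsmul]
        exact (hstab g).1 hg
      · intro hu
        refine ⟨ψ.symm u, ?_, by simp⟩
        rw [hstab, MulEquiv.apply_symm_apply]
        rw [MulAction.mem_stabilizer_iff, hsmul] at hu
        exact hu
    exact ⟨((ψ.subgroupMap _).trans (MulEquiv.subgroupCongr hmap)).trans
      (AN.stabIso hn a)⟩
  · -- transitivity on the rest of the orbit
    rintro y ⟨hy, hyx⟩ z ⟨hz, hzx⟩
    rw [Set.mem_singleton_iff] at hyx hzx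
    set b : Fin n := e ⟨y, hy⟩ with hb
    set c : Fin n := e ⟨z, hz⟩ with hc
    have hba : b ≠ a := by
      intro h
      exact hyx (Subtype.ext_iff.1 (e.injective h))
    have hca : c ≠ a := by
      intro h
      exact hzx (Subtype.ext_iff.1 (e.injective h))
    obtain ⟨σ, hσsign, hσa, hσb⟩ := AN.exists_even_fixing n hn a b c hba hca
    set σh : alternatingGroup (Fin n) :=
      ⟨σ, Equiv.Perm.mem_alternatingGroup.2 hσsign⟩ with hσh
    refine ⟨ψ.symm σh, ?_, ?_⟩
    · rw [hstab, MulEquiv.apply_symm_apply]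
      exact hσa
    · have h1 := hcompat (ψ.symm σh) ⟨y, hy⟩
      rw [MulEquiv.apply_symm_apply] at h1
      have h2 : (σh : Perm (Fin n)) b = c := hσb
      rw [← hb, h2] at h1
      have h3 := Subtype.ext_iff.1 (e.injective (hc.symm.trans h1))
      rw [MulAction.orbit.coe_smul] at h3
      exact h3.symm
end

section
/- Let n ≥ 3 and s, t, r be integers with s(n−1) + tr = 1. With P_{ij}, Λ_{ij} the affine maps of Z^n defined by P_{ij}(v) = (I+E_{ji})v and Λ_{ij}(v) = (I+E_{ji})v − s e_j, the commutator identity [Λ_{12}^{-1}, Λ_{23}^{-1}] = Λ_{13}^{-1} holds in the group of affine transformations of Z^n. -/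
/-- The shear `v ↦ (I + E_{ji}) v` of `ℤ^n` (adding the `i`-th coordinate to the `j`-th),
as a bijection of `ℤ^n`. -/
def shear (n : ℕ) (i j : Fin n) (h : i ≠ j) : Equiv.Perm (Fin n → ℤ) where
  toFun v := fun k => v k + (if k = j then v i else 0)
  invFun v := fun k => v k - (if k = j then v i else 0)
  left_inv v := by
    funext k
    by_cases hk : k = j <;> simp [hk, h, h.symm]
  right_inv v := by
    funext k
    by_cases hk : k = j <;> simp [hk, h, h.symm]

/-- The affine transformation `P_{ij} : v ↦ (I + E_{ji}) v`. -/
def Pmap (n : ℕ) (i j : Fin n) (h : i ≠ j) : Equiv.Perm (Fin n → ℤ) := shear n i j h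

/-- The affine transformation `Λ_{ij} : v ↦ (I + E_{ji}) v - s e_j`. -/
def Lmap (n : ℕ) (s : ℤ) (i j : Fin n) (h : i ≠ j) : Equiv.Perm (Fin n → ℤ) :=
  Equiv.addLeft (-(Pi.single j s)) * shear n i j h

open scoped commutatorElement

/-- For integers with `s(n-1) + tr = 1`, the commutator identity
`[Λ₁₂⁻¹, Λ₂₃⁻¹] = Λ₁₃⁻¹` holds in the group of affine transformations of `ℤ^n`. -/
theorem L_commutator_identity (n : ℕ) (hn : 3 ≤ n) (s t r : ℤ)
    (hstr : s * ((n : ℤ) - 1) + t * r = 1) :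
    ⁅(Lmap n s ⟨0, by omega⟩ ⟨1, by omega⟩ (by simp [Fin.ext_iff]))⁻¹,
        (Lmap n s ⟨1, by omega⟩ ⟨2, by omega⟩ (by simp [Fin.ext_iff]))⁻¹⁆
      = (Lmap n s ⟨0, by omega⟩ ⟨2, by omega⟩ (by simp [Fin.ext_iff]))⁻¹ := by
  ext v k
  simp only [commutatorElement_def, Lmap, mul_inv_rev, Equiv.Perm.mul_apply,
    Equiv.Perm.coe_mul, Function.comp_apply, Equiv.coe_addLeft, Equiv.addLeft_symm,
    shear, Equiv.coe_fn_mk, Equiv.coe_fn_symm_mk, Pi.add_apply,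
    Pi.neg_apply, inv_inv, Equiv.Perm.inv_def, Equiv.symm_symm, neg_neg,
    Pi.single_apply]
  by_cases h1 : k = ⟨1, by omega⟩ <;> by_cases h2 : k = ⟨2, by omega⟩ <;>
    simp [h1, h2, Fin.ext_iff] <;> ring
end
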